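/- arXiv:2304.12955 — 3 statements merged into one kernel-verified Lean document; each statement's English description precedes it below -/
import Mathlib

section
/- For every context-free grammar G, there exists a context-free grammar G' equivalent to G (i.e., generating the same language) that is in 2-Greibach normal form: the start variable S of G' does not appear on the right-hand side of any rule of G', and every rule of G' has one of the forms S → ε, A → a, or A → a b B₁⋯B_p with p ≥ 0, where a, b are terminals and A, B₁, …, B_p are variables. -/
/-- A context-free grammar is in *2-Greibach normal form* if its start variable does not
appear on the right-hand side of any rule, and every rule has one of the forms
`S → ε`, `A → a`, or `A → a b B₁⋯B_p` with `p ≥ 0`, where `a, b` are terminals and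
`A, B₁, …, B_p` are variables. -/
def ContextFreeGrammar.InTwoGNF {T : Type} (G : ContextFreeGrammar T) : Prop :=
  (∀ r ∈ G.rules, Symbol.nonterminal G.initial ∉ r.output) ∧
  ∀ r ∈ G.rules,
    (r.input = G.initial ∧ r.output = []) ∨
    (∃ a : T, r.output = [Symbol.terminal a]) ∨
    (∃ (a b : T) (Bs : List G.NT),
      r.output = Symbol.terminal a :: Symbol.terminal b :: Bs.map Symbol.nonterminal)

namespace TwoGNFProof

open ContextFreeGrammar Symbol

universe uN
variable {T : Type}

section Infra

variable {g : ContextFreeGrammar T}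

/-- `n`-step derivation. -/
def DIn (g : ContextFreeGrammar T) : ℕ → List (Symbol T g.NT) → List (Symbol T g.NT) → Prop
  | 0, u, v => u = v
  | n+1, u, v => ∃ u', g.Produces u u' ∧ DIn g n u' v

lemma DIn.zero {u v : List (Symbol T g.NT)} (h : DIn g 0 u v) : u = v := h

lemma DIn.refl (u : List (Symbol T g.NT)) : DIn g 0 u u := rfl

lemma DIn.derives {n : ℕ} {u v : List (Symbol T g.NT)} (h : DIn g n u v) : g.Derives u v := by
  induction n generalizing u with
  | zero => rw [h]
  | succ n ih => obtain ⟨u', hp, hd⟩ := h; exact hp.trans_derives (ih hd)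

lemma derives_iff_DIn {u v : List (Symbol T g.NT)} :
    g.Derives u v ↔ ∃ n, DIn g n u v := by
  constructor
  · intro h
    induction h with
    | refl => exact ⟨0, rfl⟩
    | tail _ hp ih =>
      obtain ⟨n, hn⟩ := ih
      refine ⟨n + 1, ?_⟩
      clear * - hn hp
      induction n generalizing u with
      | zero => exact ⟨_, hn ▸ hp, rfl⟩
      | succ n ih =>
        obtain ⟨u', hp', hd⟩ := hn
        exact ⟨u', hp', ih hd⟩
  · rintro ⟨n, hn⟩; exact hn.derives

lemma DIn.trans {m n : ℕ} {u v w : List (Symbol T g.NT)} (h₁ : DIn g m u v)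
    (h₂ : DIn g n v w) : DIn g (m + n) u w := by
  induction m generalizing u with
  | zero => rw [h₁.zero]; simpa using h₂
  | succ m ih =>
    obtain ⟨u', hp, hd⟩ := h₁
    have hmn : m + 1 + n = (m + n) + 1 := by omega
    rw [hmn]
    exact ⟨u', hp, ih hd⟩

lemma rewrites_append_cases {N : Type uN} {r : ContextFreeRule T N} {α β v : List (Symbol T N)}
    (h : r.Rewrites (α ++ β) v) :
    (∃ α', r.Rewrites α α' ∧ v = α' ++ β) ∨ (∃ β', r.Rewrites β β' ∧ v = α ++ β') := by
  induction α generalizing v with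
  | nil => exact .inr ⟨v, h, rfl⟩
  | cons x α ih =>
    cases h with
    | head s =>
      exact .inl ⟨r.output ++ α, ContextFreeRule.Rewrites.head α, by simp⟩
    | cons x h' =>
      rcases ih h' with ⟨α', hr, rfl⟩ | ⟨β', hr, rfl⟩
      · exact .inl ⟨x :: α', hr.cons x, rfl⟩
      · exact .inr ⟨β', hr, rfl⟩

lemma DIn.append_cases {n : ℕ} {α β v : List (Symbol T g.NT)} (h : DIn g n (α ++ β) v) :
    ∃ n₁ n₂ v₁ v₂, n₁ + n₂ = n ∧ v = v₁ ++ v₂ ∧ DIn g n₁ α v₁ ∧ DIn g n₂ β v₂ := by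
  induction n generalizing α β with
  | zero => exact ⟨0, 0, α, β, rfl, h.zero.symm, rfl, rfl⟩
  | succ n ih =>
    obtain ⟨u', ⟨r, hr, hrw⟩, hd⟩ := h
    rcases rewrites_append_cases hrw with ⟨α', hrw', rfl⟩ | ⟨β', hrw', rfl⟩
    · obtain ⟨n₁, n₂, v₁, v₂, hn, hv, h₁, h₂⟩ := ih hd
      exact ⟨n₁ + 1, n₂, v₁, v₂, by omega, hv, ⟨α', ⟨r, hr, hrw'⟩, h₁⟩, h₂⟩
    · obtain ⟨n₁, n₂, v₁, v₂, hn, hv, h₁, h₂⟩ := ih hd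
      exact ⟨n₁, n₂ + 1, v₁, v₂, by omega, hv, h₁, ⟨β', ⟨r, hr, hrw'⟩, h₂⟩⟩

lemma DIn.append_right {n : ℕ} {β w : List (Symbol T g.NT)} (h : DIn g n β w)
    (p : List (Symbol T g.NT)) : DIn g n (β ++ p) (w ++ p) := by
  induction n generalizing β with
  | zero => rw [h.zero]; exact .refl _
  | succ n ih =>
    obtain ⟨u', hp, hd⟩ := h
    exact ⟨u' ++ p, hp.append_right p, ih hd⟩

lemma DIn.append_left {n : ℕ} {β w : List (Symbol T g.NT)} (h : DIn g n β w)
    (p : List (Symbol T g.NT)) : DIn g n (p ++ β) (p ++ w) := by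
  induction n generalizing β with
  | zero => rw [h.zero]; exact .refl _
  | succ n ih =>
    obtain ⟨u', hp, hd⟩ := h
    exact ⟨p ++ u', hp.append_left p, ih hd⟩

lemma DIn.append {m n : ℕ} {α β v w : List (Symbol T g.NT)} (h₁ : DIn g m α v)
    (h₂ : DIn g n β w) : DIn g (m + n) (α ++ β) (v ++ w) :=
  (h₁.append_right β).trans (h₂.append_left v)

lemma DIn.nil {n : ℕ} {v : List (Symbol T g.NT)} (h : DIn g n [] v) : v = [] := by
  induction n with
  | zero => exact h.zero.symm
  | succ n ih =>
    obtain ⟨u', ⟨r, _, hrw⟩, _⟩ := h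
    obtain ⟨p, q, hpq, -⟩ := hrw.exists_parts
    exact absurd hpq (by simp)

lemma DIn.terminal {n : ℕ} {a : T} {v : List (Symbol T g.NT)}
    (h : DIn g n [Symbol.terminal a] v) : v = [Symbol.terminal a] := by
  induction n with
  | zero => exact h.zero.symm
  | succ n ih =>
    obtain ⟨u', ⟨r, _, hrw⟩, _⟩ := h
    obtain ⟨p, q, hpq, -⟩ := hrw.exists_parts
    exfalso
    rcases p with _ | ⟨x, _ | ⟨y, p⟩⟩ <;> simp_all

lemma DIn.head_cases {n : ℕ} {A : g.NT} {v : List (Symbol T g.NT)}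
    (h : DIn g n [Symbol.nonterminal A] v) :
    (n = 0 ∧ v = [Symbol.nonterminal A]) ∨
    ∃ r ∈ g.rules, r.input = A ∧ ∃ m, m + 1 = n ∧ DIn g m r.output v := by
  cases n with
  | zero => exact .inl ⟨rfl, h.zero.symm⟩
  | succ n =>
    obtain ⟨u', ⟨r, hr, hrw⟩, hd⟩ := h
    obtain ⟨p, q, hpq, hout⟩ := hrw.exists_parts
    have hp : p = [] ∧ A = r.input ∧ q = [] := by
      rcases p with _ | ⟨x, p⟩
      · simp only [List.nil_append, List.cons_append, List.cons.injEq] at hpq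
        refine ⟨rfl, ?_, hpq.2.symm⟩
        have := hpq.1
        cases this; rfl
      · exfalso; rcases p with _ | ⟨y, p⟩ <;> simp_all
    obtain ⟨rfl, rfl, rfl⟩ := hp
    simp only [List.append_nil, List.nil_append] at hout
    exact .inr ⟨r, hr, rfl, n, rfl, hout ▸ hd⟩

lemma symbol_closed {u v : List (Symbol T g.NT)} (h : g.Derives u v) :
    ∀ s ∈ v, s ∈ u ∨ ∃ r ∈ g.rules, s ∈ r.output := by
  induction h with
  | refl => exact fun s hs => .inl hs
  | tail _ hp ih =>
    obtain ⟨r, hr, hrw⟩ := hp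
    obtain ⟨p, q, rfl, rfl⟩ := hrw.exists_parts
    intro s hs
    simp only [List.mem_append] at hs
    rcases hs with (hs | hs) | hs
    · exact ih s (by simp [hs])
    · exact .inr ⟨r, hr, hs⟩
    · exact ih s (by simp [hs])

lemma map_terminal_injective {N : Type uN} {u v : List T}
    (h : List.map (Symbol.terminal : T → Symbol T N) u = List.map Symbol.terminal v) : u = v := by
  have : Function.Injective (Symbol.terminal : T → Symbol T N) := by
    intro a b hab; cases hab; rfl
  exact List.map_injective_iff.mpr this h

lemma map_terminal_append_cases {N : Type uN} {w : List T} {v₁ v₂ : List (Symbol T N)}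
    (h : List.map Symbol.terminal w = v₁ ++ v₂) :
    ∃ w₁ w₂, w = w₁ ++ w₂ ∧ v₁ = List.map Symbol.terminal w₁ ∧ v₂ = List.map Symbol.terminal w₂ := by
  induction v₁ generalizing w with
  | nil => exact ⟨[], w, by simp, rfl, by simpa using h.symm⟩
  | cons x v₁ ih =>
    cases w with
    | nil => simp at h
    | cons a w =>
      simp only [List.map_cons, List.cons_append, List.cons.injEq] at h
      obtain ⟨w₁, w₂, rfl, h₁, h₂⟩ := ih h.2
      exact ⟨a :: w₁, w₂, rfl, by simp [← h.1, h₁], h₂⟩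

end Infra


/-- If a list `γ` derives a string beginning with symbol `x`, then `γ` splits as
`γ₁ ++ s :: γ₂` where `γ₁` derives `[]` and `s` derives `x :: ρ₁` and `γ₂` derives `ρ₂`. -/
lemma list_decomp {n : ℕ} {γ ρ : List (Symbol T g.NT)} {x : Symbol T g.NT}
    (h : DIn g n γ (x :: ρ)) :
    ∃ γ₁ s γ₂ ρ₁ ρ₂ m₀ m₁ m₂, γ = γ₁ ++ s :: γ₂ ∧ DIn g m₀ γ₁ [] ∧
      DIn g m₁ [s] (x :: ρ₁) ∧ DIn g m₂ γ₂ ρ₂ ∧ ρ = ρ₁ ++ ρ₂ ∧ m₀ + m₁ + m₂ ≤ n := by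
  induction γ generalizing n ρ with
  | nil => exact absurd h.nil (by simp)
  | cons s γ' ih =>
    have h' : DIn g n ([s] ++ γ') (x :: ρ) := h
    obtain ⟨n₁, n₂, v₁, v₂, hn, hv, h₁, h₂⟩ := h'.append_cases
    cases v₁ with
    | nil =>
      simp only [List.nil_append] at hv
      obtain ⟨γ₁, s', γ₂, ρ₁, ρ₂, m₀, m₁, m₂, hsplit, h0, hs, h2, hρ, hm⟩ := ih (hv ▸ h₂)
      refine ⟨s :: γ₁, s', γ₂, ρ₁, ρ₂, n₁ + m₀, m₁, m₂, by rw [hsplit]; simp, ?_, hs, h2, hρ, by omega⟩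
      have := h₁.append h0
      simpa using this
    | cons y v₁' =>
      simp only [List.cons_append, List.cons.injEq] at hv
      obtain ⟨rfl, rfl⟩ := hv
      exact ⟨[], s, γ', v₁', v₂, 0, n₁, n₂, rfl, .refl _, h₁, h₂, rfl, by omega⟩

/-- Decomposition of a derivation of a word beginning with terminal `b` from a single
nonterminal: find the rule that emits `b`. -/
lemma head_terminal_decomp {n : ℕ} {A : g.NT} {b : T} {ρ : List (Symbol T g.NT)}
    (h : DIn g n [Symbol.nonterminal A] (Symbol.terminal b :: ρ)) :
    ∃ X r γ₁ γ₂ ρ₁ ρ₂ n₁ n₂, r ∈ g.rules ∧ r.input = X ∧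
      r.output = γ₁ ++ Symbol.terminal b :: γ₂ ∧ g.Derives γ₁ [] ∧
      DIn g n₂ γ₂ ρ₁ ∧ DIn g n₁ [Symbol.nonterminal A] (Symbol.nonterminal X :: ρ₂) ∧
      ρ = ρ₁ ++ ρ₂ ∧ n₁ < n ∧ n₂ < n := by
  induction n using Nat.strong_induction_on generalizing A ρ with
  | _ n IH =>
  rcases h.head_cases with ⟨rfl, habs⟩ | ⟨r₀, hr₀, hin₀, m, hm, hd⟩
  · exact absurd habs.symm (by simp)
  obtain ⟨γ₁, s, γ₂, ρ₁L, ρ₂L, m₀, m₁, m₂, hsplit, h0, hs, h2, hρ, hsum⟩ := list_decomp hd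
  cases s with
  | terminal c =>
    have := hs.terminal
    simp only [List.cons.injEq] at this
    obtain ⟨hbc, rfl⟩ := this
    cases hbc
    refine ⟨A, r₀, γ₁, γ₂, ρ₂L, [], 0, m₂, hr₀, hin₀, hsplit, h0.derives, h2, .refl _,
      by simpa using hρ, by omega, by omega⟩
  | nonterminal Y =>
    obtain ⟨X, r, γ₁', γ₂', ρ₁', ρ₂', k₁, k₂, hr, hin, hout, hnull, hγ₂', hlc, hρ₁L, hk₁, hk₂⟩ :=
      IH m₁ (by omega) hs
    refine ⟨X, r, γ₁', γ₂', ρ₁', ρ₂' ++ ρ₂L, 1 + (m₀ + (k₁ + m₂)), k₂, hr, hin, hout, hnull,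
      hγ₂', ?_, by rw [hρ, hρ₁L]; simp, by omega, by omega⟩
    have hstep : DIn g 1 [Symbol.nonterminal A] r₀.output :=
      ⟨r₀.output, ⟨r₀, hr₀, hin₀ ▸ ContextFreeRule.Rewrites.input_output⟩, rfl⟩
    have hrest : DIn g (m₀ + (k₁ + m₂)) (γ₁ ++ ([Symbol.nonterminal Y] ++ γ₂))
        ([] ++ ((Symbol.nonterminal X :: ρ₂') ++ ρ₂L)) := h0.append (hlc.append h2)
    have := hstep.trans (by rw [hsplit]; simpa using hrest)
    simpa using this

/-- Decomposition of a derivation `A ⇒* X v` (`v` nonempty, all terminal): find the lowest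
spine rule contributing a nonempty piece of `v`. -/
lemma head_nonterminal_decomp {n : ℕ} {A X : g.NT} {v : List T}
    (h : DIn g n [Symbol.nonterminal A] (Symbol.nonterminal X :: List.map Symbol.terminal v))
    (hv : v ≠ []) :
    ∃ X' Y r γ₁ γ₂ y rest n₁ n₂, r ∈ g.rules ∧ r.input = X' ∧
      r.output = γ₁ ++ Symbol.nonterminal Y :: γ₂ ∧ g.Derives γ₁ [] ∧
      g.Derives [Symbol.nonterminal Y] [Symbol.nonterminal X] ∧
      DIn g n₂ γ₂ (List.map Symbol.terminal y) ∧ y ≠ [] ∧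
      DIn g n₁ [Symbol.nonterminal A] (Symbol.nonterminal X' :: List.map Symbol.terminal rest) ∧
      v = y ++ rest ∧ n₁ < n ∧ n₂ < n := by
  induction n using Nat.strong_induction_on generalizing A v with
  | _ n IH =>
  rcases h.head_cases with ⟨rfl, habs⟩ | ⟨r₀, hr₀, hin₀, m, hm, hd⟩
  · exfalso
    have := congrArg List.length habs
    simp at this
    exact hv (by simpa using this.symm)
  obtain ⟨γ₁, s, γ₂, ρ₁L, ρ₂L, m₀, m₁, m₂, hsplit, h0, hs, h2, hρ, hsum⟩ := list_decomp hd
  obtain ⟨w₁, w₂, rfl, hρ₁, hρ₂⟩ := map_terminal_append_cases hρ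
  subst hρ₁ hρ₂
  cases s with
  | terminal c => exact absurd hs.terminal (by simp)
  | nonterminal Y₀ =>
    cases hw₁ : w₁ with
    | nil =>
      subst hw₁
      refine ⟨A, Y₀, r₀, γ₁, γ₂, w₂, [], 0, m₂, hr₀, hin₀, hsplit, h0.derives,
        (by simpa using hs.derives), h2, by simpa using hv, .refl _, by simp, by omega, by omega⟩
    | cons c w₁' =>
      obtain ⟨X', Y, r, γ₁', γ₂', y', rest', k₁, k₂, hr, hin, hout, hnull, hYX, hγ₂', hy', hlc,
        hw₁eq, hk₁, hk₂⟩ := IH m₁ (by omega) hs (by rw [hw₁]; simp)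
      refine ⟨X', Y, r, γ₁', γ₂', y', rest' ++ w₂, 1 + (m₀ + (k₁ + m₂)), k₂, hr, hin, hout,
        hnull, hYX, hγ₂', hy', ?_, by rw [← hw₁, hw₁eq]; simp, by omega, by omega⟩
      have hstep : DIn g 1 [Symbol.nonterminal A] r₀.output :=
        ⟨r₀.output, ⟨r₀, hr₀, hin₀ ▸ ContextFreeRule.Rewrites.input_output⟩, rfl⟩
      have hrest : DIn g (m₀ + (k₁ + m₂)) (γ₁ ++ ([Symbol.nonterminal Y₀] ++ γ₂))
          ([] ++ ((Symbol.nonterminal X' :: List.map Symbol.terminal rest') ++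
            List.map Symbol.terminal w₂)) := h0.append (hlc.append h2)
      have := hstep.trans (by rw [hsplit]; simpa using hrest)
      simpa using this

section Construction

open scoped Classical

variable (g : ContextFreeGrammar T)

/-- Nonterminals of the GNF grammar: start `none`, `W B`, `P (A,X)`, `Q (B,b)`, `E a`. -/
abbrev NTH : Type := Option (g.NT ⊕ ((g.NT × g.NT) ⊕ ((g.NT × T) ⊕ T)))

variable {g}

def Wn (B : g.NT) : NTH g := some (.inl B)
def Pn (A X : g.NT) : NTH g := some (.inr (.inl (A, X)))
def Qn (B : g.NT) (b : T) : NTH g := some (.inr (.inr (.inl (B, b))))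
def En (a : T) : NTH g := some (.inr (.inr (.inr a)))

variable (g)

/-- `γ` derives the empty word. -/
def NullL (γ : List (Symbol T g.NT)) : Prop := g.Derives γ []

/-- `A` derives the terminal word `w`. -/
def WD (A : g.NT) (w : List T) : Prop :=
  g.Derives [Symbol.nonterminal A] (w.map Symbol.terminal)

/-- `A` derives the single nonterminal `X`. -/
def UD (A X : g.NT) : Prop :=
  g.Derives [Symbol.nonterminal A] [Symbol.nonterminal X]

noncomputable def occList : List g.NT :=
  g.initial :: g.rules.toList.flatMap (fun r =>
    r.input :: r.output.filterMap (fun s =>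
      match s with | .nonterminal B => some B | .terminal _ => none))

noncomputable def termList : List T :=
  g.rules.toList.flatMap (fun r =>
    r.output.filterMap (fun s =>
      match s with | .terminal a => some a | .nonterminal _ => none))

lemma initial_mem_occList : g.initial ∈ occList g := by simp [occList]

lemma input_mem_occList {r : ContextFreeRule T g.NT} (hr : r ∈ g.rules) :
    r.input ∈ occList g := by
  simp only [occList, List.mem_cons, List.mem_flatMap, Finset.mem_toList]
  exact .inr ⟨r, hr, by simp⟩

lemma output_nt_mem_occList {r : ContextFreeRule T g.NT} (hr : r ∈ g.rules) {B : g.NT}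
    (hB : Symbol.nonterminal B ∈ r.output) : B ∈ occList g := by
  simp only [occList, List.mem_cons, List.mem_flatMap, Finset.mem_toList]
  refine .inr ⟨r, hr, .inr ?_⟩
  simp only [List.mem_filterMap]
  exact ⟨_, hB, rfl⟩

lemma output_t_mem_termList {r : ContextFreeRule T g.NT} (hr : r ∈ g.rules) {a : T}
    (ha : Symbol.terminal a ∈ r.output) : a ∈ termList g := by
  simp only [termList, List.mem_flatMap, Finset.mem_toList, List.mem_filterMap]
  exact ⟨r, hr, _, ha, rfl⟩

lemma ud_mem_occList {A X : g.NT} (h : UD g A X) (hA : A ∈ occList g) : X ∈ occList g := by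
  rcases symbol_closed h (Symbol.nonterminal X) (by simp) with hs | ⟨r, hr, hs⟩
  · simp only [List.mem_singleton, Symbol.nonterminal.injEq] at hs
    exact hs ▸ hA
  · exact output_nt_mem_occList g hr hs

lemma derived_terminal_mem {A : g.NT} {w : List T} (h : WD g A w) {c : T} (hc : c ∈ w) :
    c ∈ termList g := by
  rcases symbol_closed h (Symbol.terminal c) (by simp only [List.mem_map]; exact ⟨c, hc, rfl⟩)
    with hs | ⟨r, hr, hs⟩
  · simp at hs
  · exact output_t_mem_termList g hr hs

variable {g} in
lemma derives_nt_terminal_mem {α : List (Symbol T g.NT)} {w : List T}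
    (h : g.Derives α (w.map Symbol.terminal)) (hα : ∀ a, Symbol.terminal a ∉ α)
    {c : T} (hc : c ∈ w) : c ∈ termList g := by
  rcases symbol_closed h (Symbol.terminal c) (by simp only [List.mem_map]; exact ⟨c, hc, rfl⟩)
    with hs | ⟨r, hr, hs⟩
  · exact absurd hs (hα c)
  · exact output_t_mem_termList g hr hs

def splits {α : Type*} : List α → List (List α × α × List α)
  | [] => []
  | x :: xs => ([], x, xs) :: (splits xs).map (fun p => (x :: p.1, p.2.1, p.2.2))

lemma mem_splits {α : Type*} {l : List α} {p : List α × α × List α} :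
    p ∈ splits l ↔ l = p.1 ++ p.2.1 :: p.2.2 := by
  induction l generalizing p with
  | nil => simp only [splits, List.not_mem_nil, false_iff]; intro h; exact absurd h (by simp)
  | cons x xs ih =>
    simp only [splits, List.mem_cons, List.mem_map]
    constructor
    · rintro (rfl | ⟨q, hq, rfl⟩)
      · rfl
      · simp [ih.mp hq]
    · intro h
      obtain ⟨p₁, p₂⟩ := p
      obtain ⟨p₂₁, p₂₂⟩ := p₂
      cases p₁ with
      | nil => simp_all
      | cons y p₁ =>
        simp only [List.cons_append, List.cons.injEq] at h
        exact .inr ⟨(p₁, p₂₁, p₂₂), ih.mpr h.2, by simp [h.1]⟩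

noncomputable def trL : List (Symbol T g.NT) → List (List (NTH g))
  | [] => [[]]
  | .terminal a :: γ => (trL γ).map (fun d => En a :: d)
  | .nonterminal B :: γ =>
      (trL γ).map (fun d => Wn B :: d) ++ (if NullL g [Symbol.nonterminal B] then trL γ else [])

/-- All candidate heads `(c, ns)` such that `terminal c :: map nonterminal ns`
expands the nonempty-yield part of `γ₂`. -/
noncomputable def expandFirst (γ₂ : List (Symbol T g.NT)) : List (T × List (NTH g)) :=
  (splits γ₂).flatMap (fun p =>
    if NullL g p.1 then
      (match p.2.1 with
       | .terminal c => [(c, ([] : List (NTH g)))]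
       | .nonterminal C => (termList g).flatMap (fun c =>
           (c, [Qn C c]) :: (if WD g C [c] then [(c, ([] : List (NTH g)))] else []))
      ).flatMap (fun (cm : T × List (NTH g)) => (trL g p.2.2).map (fun trl => (cm.1, cm.2 ++ trl)))
    else [])

noncomputable def tailOuts (A X' : g.NT) (e : T × List (NTH g)) :
    List (List (Symbol T (NTH g))) :=
  (Symbol.terminal e.1 :: (e.2 ++ [Pn A X']).map Symbol.nonterminal) ::
  (if UD g A X' then [Symbol.terminal e.1 :: e.2.map Symbol.nonterminal] else [])

noncomputable def PCoreOuts (A X : g.NT) : List (List (Symbol T (NTH g))) :=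
  g.rules.toList.flatMap (fun r =>
    (splits r.output).flatMap (fun p =>
      match p.2.1 with
      | .nonterminal Y =>
        if NullL g p.1 ∧ UD g Y X then
          (expandFirst g p.2.2).flatMap (tailOuts g A r.input)
        else []
      | .terminal _ => []))

noncomputable def QOuts (B : g.NT) (b : T) : List (List (Symbol T (NTH g))) :=
  g.rules.toList.flatMap (fun r =>
    (splits r.output).flatMap (fun p =>
      if p.2.1 = Symbol.terminal b ∧ NullL g p.1 then
        ((expandFirst g p.2.2).flatMap (tailOuts g B r.input))
        ++ (if NullL g p.2.2 then PCoreOuts g B r.input else [])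
      else []))

noncomputable def rulesL : List (ContextFreeRule T (NTH g)) :=
  (if NullL g [Symbol.nonterminal g.initial] then [⟨none, []⟩] else [])
  ++ (termList g).flatMap (fun a =>
       ⟨En a, [Symbol.terminal a]⟩ ::
       ⟨none, [Symbol.terminal a, Symbol.nonterminal (Qn g.initial a)]⟩ ::
       (if WD g g.initial [a] then [⟨none, [Symbol.terminal a]⟩] else []))
  ++ (occList g).flatMap (fun B => (termList g).flatMap (fun a =>
       ⟨Wn B, [Symbol.terminal a, Symbol.nonterminal (Qn B a)]⟩ ::
       (if WD g B [a] then [⟨Wn B, [Symbol.terminal a]⟩] else [])))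
  ++ (occList g).flatMap (fun B => (termList g).flatMap (fun b =>
       (QOuts g B b).map (fun o => ⟨Qn B b, o⟩)))
  ++ (occList g).flatMap (fun A => (occList g).flatMap (fun X =>
       (PCoreOuts g A X).map (fun o => ⟨Pn A X, o⟩)))

/-- The GNF-style grammar built from `g`. -/
@[reducible] noncomputable def HG : ContextFreeGrammar T :=
  ⟨NTH g, none, (rulesL g).toFinset⟩

/-- Intended semantics of each nonterminal of `HG g`. -/
def Sem : NTH g → List T → Prop
  | none => fun w => g.Derives [Symbol.nonterminal g.initial] (w.map Symbol.terminal)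
  | some (.inl B) => fun w => w ≠ [] ∧ WD g B w
  | some (.inr (.inl (A, X))) => fun w =>
      w ≠ [] ∧ g.Derives [Symbol.nonterminal A] (Symbol.nonterminal X :: w.map Symbol.terminal)
  | some (.inr (.inr (.inl (B, b)))) => fun w => w ≠ [] ∧ WD g B (b :: w)
  | some (.inr (.inr (.inr a))) => fun w => w = [a]

end Construction

section Rules

open scoped Classical

variable {g : ContextFreeGrammar T}

lemma derives_append {g' : ContextFreeGrammar T} {u v x y : List (Symbol T g'.NT)}
    (h₁ : g'.Derives u v) (h₂ : g'.Derives x y) : g'.Derives (u ++ x) (v ++ y) :=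
  (h₁.append_right x).trans (h₂.append_left v)

lemma produces_rule {g' : ContextFreeGrammar T} {ν : g'.NT} {o : List (Symbol T g'.NT)}
    (h : (⟨ν, o⟩ : ContextFreeRule T g'.NT) ∈ g'.rules) :
    g'.Produces [Symbol.nonterminal ν] o :=
  ⟨_, h, ContextFreeRule.Rewrites.input_output⟩

lemma mem_HG_rules {r : ContextFreeRule T (NTH g)} :
    r ∈ (HG g).rules ↔ r ∈ rulesL g := List.mem_toFinset

lemma rule_eps (h : NullL g [Symbol.nonterminal g.initial]) :
    (⟨none, []⟩ : ContextFreeRule T (NTH g)) ∈ (HG g).rules := by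
  rw [mem_HG_rules]
  unfold rulesL
  refine List.mem_append_left _ <| List.mem_append_left _ <| List.mem_append_left _ <|
    List.mem_append_left _ ?_
  simp [h]

lemma rule_S_single {a : T} (ha : a ∈ termList g) (h : WD g g.initial [a]) :
    (⟨none, [Symbol.terminal a]⟩ : ContextFreeRule T (NTH g)) ∈ (HG g).rules := by
  rw [mem_HG_rules]
  unfold rulesL
  refine List.mem_append_left _ <| List.mem_append_left _ <| List.mem_append_left _ <|
    List.mem_append_right _ <| List.mem_flatMap.mpr ⟨a, ha, ?_⟩
  simp [h]

lemma rule_S_q {a : T} (ha : a ∈ termList g) :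
    (⟨none, [Symbol.terminal a, Symbol.nonterminal (Qn g.initial a)]⟩ :
      ContextFreeRule T (NTH g)) ∈ (HG g).rules := by
  rw [mem_HG_rules]
  unfold rulesL
  refine List.mem_append_left _ <| List.mem_append_left _ <| List.mem_append_left _ <|
    List.mem_append_right _ <| List.mem_flatMap.mpr ⟨a, ha, ?_⟩
  simp

lemma rule_E {a : T} (ha : a ∈ termList g) :
    (⟨En a, [Symbol.terminal a]⟩ : ContextFreeRule T (NTH g)) ∈ (HG g).rules := by
  rw [mem_HG_rules]
  unfold rulesL
  refine List.mem_append_left _ <| List.mem_append_left _ <| List.mem_append_left _ <|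
    List.mem_append_right _ <| List.mem_flatMap.mpr ⟨a, ha, ?_⟩
  simp

lemma rule_W_single {B : g.NT} {a : T} (hB : B ∈ occList g) (ha : a ∈ termList g)
    (h : WD g B [a]) :
    (⟨Wn B, [Symbol.terminal a]⟩ : ContextFreeRule T (NTH g)) ∈ (HG g).rules := by
  rw [mem_HG_rules]
  unfold rulesL
  refine List.mem_append_left _ <| List.mem_append_left _ <| List.mem_append_right _ <|
    List.mem_flatMap.mpr ⟨B, hB, List.mem_flatMap.mpr ⟨a, ha, ?_⟩⟩
  simp [h]

lemma rule_W_q {B : g.NT} {a : T} (hB : B ∈ occList g) (ha : a ∈ termList g) :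
    (⟨Wn B, [Symbol.terminal a, Symbol.nonterminal (Qn B a)]⟩ :
      ContextFreeRule T (NTH g)) ∈ (HG g).rules := by
  rw [mem_HG_rules]
  unfold rulesL
  refine List.mem_append_left _ <| List.mem_append_left _ <| List.mem_append_right _ <|
    List.mem_flatMap.mpr ⟨B, hB, List.mem_flatMap.mpr ⟨a, ha, ?_⟩⟩
  simp

lemma rule_Q {B : g.NT} {b : T} {o : List (Symbol T (NTH g))} (hB : B ∈ occList g)
    (hb : b ∈ termList g) (ho : o ∈ QOuts g B b) :
    (⟨Qn B b, o⟩ : ContextFreeRule T (NTH g)) ∈ (HG g).rules := by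
  rw [mem_HG_rules]
  unfold rulesL
  refine List.mem_append_left _ <| List.mem_append_right _ <|
    List.mem_flatMap.mpr ⟨B, hB, List.mem_flatMap.mpr ⟨b, hb, List.mem_map.mpr ⟨o, ho, rfl⟩⟩⟩

lemma rule_P {A X : g.NT} {o : List (Symbol T (NTH g))} (hA : A ∈ occList g)
    (hX : X ∈ occList g) (ho : o ∈ PCoreOuts g A X) :
    (⟨Pn A X, o⟩ : ContextFreeRule T (NTH g)) ∈ (HG g).rules := by
  rw [mem_HG_rules]
  unfold rulesL
  exact List.mem_append_right _ <|
    List.mem_flatMap.mpr ⟨A, hA, List.mem_flatMap.mpr ⟨X, hX, List.mem_map.mpr ⟨o, ho, rfl⟩⟩⟩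

lemma mem_tailOuts₁ {A X' : g.NT} (e : T × List (NTH g)) :
    (Symbol.terminal e.1 :: (e.2 ++ [Pn A X']).map Symbol.nonterminal) ∈ tailOuts g A X' e := by
  simp [tailOuts]

lemma mem_tailOuts₂ {A X' : g.NT} (e : T × List (NTH g)) (h : UD g A X') :
    (Symbol.terminal e.1 :: e.2.map Symbol.nonterminal) ∈ tailOuts g A X' e := by
  simp [tailOuts, h]

lemma mem_expandFirst_t {γ₂ η₁ η₂ : List (Symbol T g.NT)} {c : T} {trl : List (NTH g)}
    (hsplit : γ₂ = η₁ ++ Symbol.terminal c :: η₂) (h1 : NullL g η₁) (htrl : trl ∈ trL g η₂) :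
    (c, trl) ∈ expandFirst g γ₂ := by
  simp only [expandFirst, List.mem_flatMap]
  refine ⟨(η₁, Symbol.terminal c, η₂), mem_splits.mpr hsplit, ?_⟩
  simp only [h1, if_true, List.mem_flatMap, List.mem_map]
  exact ⟨(c, []), by simp, trl, htrl, by simp⟩

lemma mem_expandFirst_q {γ₂ η₁ η₂ : List (Symbol T g.NT)} {C : g.NT} {c : T}
    {trl : List (NTH g)} (hsplit : γ₂ = η₁ ++ Symbol.nonterminal C :: η₂) (h1 : NullL g η₁)
    (hc : c ∈ termList g) (htrl : trl ∈ trL g η₂) :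
    (c, Qn C c :: trl) ∈ expandFirst g γ₂ := by
  simp only [expandFirst, List.mem_flatMap]
  refine ⟨(η₁, Symbol.nonterminal C, η₂), mem_splits.mpr hsplit, ?_⟩
  simp only [h1, if_true, List.mem_flatMap, List.mem_map, List.mem_cons]
  exact ⟨(c, [Qn C c]), ⟨c, hc, .inl rfl⟩, trl, htrl, by simp⟩

lemma mem_expandFirst_w {γ₂ η₁ η₂ : List (Symbol T g.NT)} {C : g.NT} {c : T}
    {trl : List (NTH g)} (hsplit : γ₂ = η₁ ++ Symbol.nonterminal C :: η₂) (h1 : NullL g η₁)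
    (hc : c ∈ termList g) (hw : WD g C [c]) (htrl : trl ∈ trL g η₂) :
    (c, trl) ∈ expandFirst g γ₂ := by
  simp only [expandFirst, List.mem_flatMap]
  refine ⟨(η₁, Symbol.nonterminal C, η₂), mem_splits.mpr hsplit, ?_⟩
  simp only [h1, if_true, List.mem_flatMap, List.mem_map, List.mem_cons]
  exact ⟨(c, []), ⟨c, hc, .inr (by simp [hw])⟩, trl, htrl, by simp⟩

lemma mem_PCoreOuts {A X Y : g.NT} {r : ContextFreeRule T g.NT} {γ₁ γ₂ : List (Symbol T g.NT)}
    {e : T × List (NTH g)} {o : List (Symbol T (NTH g))} (hr : r ∈ g.rules)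
    (hout : r.output = γ₁ ++ Symbol.nonterminal Y :: γ₂) (h1 : NullL g γ₁) (hYX : UD g Y X)
    (he : e ∈ expandFirst g γ₂) (ho : o ∈ tailOuts g A r.input e) :
    o ∈ PCoreOuts g A X := by
  simp only [PCoreOuts, List.mem_flatMap, Finset.mem_toList]
  exact ⟨r, hr, (γ₁, Symbol.nonterminal Y, γ₂), mem_splits.mpr hout,
    by simp only [h1, hYX, and_self, if_true, List.mem_flatMap]; exact ⟨e, he, ho⟩⟩

lemma mem_QOuts_a {B : g.NT} {b : T} {r : ContextFreeRule T g.NT}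
    {γ₁ γ₂ : List (Symbol T g.NT)} {e : T × List (NTH g)} {o : List (Symbol T (NTH g))}
    (hr : r ∈ g.rules) (hout : r.output = γ₁ ++ Symbol.terminal b :: γ₂) (h1 : NullL g γ₁)
    (he : e ∈ expandFirst g γ₂) (ho : o ∈ tailOuts g B r.input e) :
    o ∈ QOuts g B b := by
  simp only [QOuts, List.mem_flatMap, Finset.mem_toList]
  refine ⟨r, hr, (γ₁, Symbol.terminal b, γ₂), mem_splits.mpr hout, ?_⟩
  simp only [h1, and_self, if_true, List.mem_append, List.mem_flatMap]
  exact .inl ⟨e, he, ho⟩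

lemma mem_QOuts_b {B : g.NT} {b : T} {r : ContextFreeRule T g.NT}
    {γ₁ γ₂ : List (Symbol T g.NT)} {o : List (Symbol T (NTH g))}
    (hr : r ∈ g.rules) (hout : r.output = γ₁ ++ Symbol.terminal b :: γ₂) (h1 : NullL g γ₁)
    (h2 : NullL g γ₂) (ho : o ∈ PCoreOuts g B r.input) :
    o ∈ QOuts g B b := by
  simp only [QOuts, List.mem_flatMap, Finset.mem_toList]
  refine ⟨r, hr, (γ₁, Symbol.terminal b, γ₂), mem_splits.mpr hout, ?_⟩
  simp only [h1, and_self, if_true, List.mem_append, h2]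
  exact .inr (by simpa using ho)

end Rules

section Completeness

open scoped Classical

variable {g : ContextFreeGrammar T}

theorem completeness : ∀ n : ℕ,
    (∀ B (b : T) u, u ≠ [] → DIn g n [Symbol.nonterminal B]
        (Symbol.terminal b :: u.map Symbol.terminal) →
      (HG g).Derives [Symbol.nonterminal (Qn B b)] (u.map Symbol.terminal)) ∧
    (∀ A X v, A ∈ occList g → v ≠ [] →
      DIn g n [Symbol.nonterminal A] (Symbol.nonterminal X :: v.map Symbol.terminal) →
      ∃ o ∈ PCoreOuts g A X, (HG g).Derives o (v.map Symbol.terminal)) := by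
  intro n
  induction n using Nat.strong_induction_on with
  | _ n ih =>
  -- W-helper
  have hW : ∀ m, m < n → ∀ (B : g.NT) (w : List T), w ≠ [] →
      DIn g m [Symbol.nonterminal B] (w.map Symbol.terminal) →
      (HG g).Derives [Symbol.nonterminal (Wn B)] (w.map Symbol.terminal) := by
    intro m hm B w hw h
    obtain ⟨a, u, rfl⟩ : ∃ a u, w = a :: u := by
      cases w with | nil => exact absurd rfl hw | cons a u => exact ⟨a, u, rfl⟩
    have hBocc : B ∈ occList g := by
      rcases h.head_cases with ⟨_, habs⟩ | ⟨r, hr, hin, _⟩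
      · exact absurd habs (by simp)
      · exact hin ▸ input_mem_occList g hr
    have ha : a ∈ termList g := derived_terminal_mem g h.derives (by simp)
    cases u with
    | nil =>
      exact (produces_rule (rule_W_single hBocc ha h.derives)).single
    | cons c u' =>
      have hq := (ih m hm).1 B a (c :: u') (by simp) h
      refine (produces_rule (rule_W_q hBocc ha)).trans_derives ?_
      have : ([Symbol.terminal a] : List (Symbol T (NTH g))) ++
          [Symbol.nonterminal (Qn B a)] = [Symbol.terminal a, Symbol.nonterminal (Qn B a)] := rfl
      rw [← this, List.map_cons]
      exact derives_append (by rfl) hq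
  -- Tr-helper
  have hTr : ∀ m, m < n → ∀ (γ : List (Symbol T g.NT)), (∀ a, Symbol.terminal a ∈ γ → a ∈ termList g) →
      ∀ (w : List T), DIn g m γ (w.map Symbol.terminal) →
      ∃ trl ∈ trL g γ, (HG g).Derives (trl.map Symbol.nonterminal) (w.map Symbol.terminal) := by
    intro m hm γ
    induction γ generalizing m with
    | nil =>
      intro _ w h
      have := h.nil
      have hw : w = [] := by cases w <;> simp_all
      subst hw
      exact ⟨[], by simp [trL], by simpa using Derives.refl (g := HG g) []⟩
    | cons s γ' ihγ =>
      intro hγt w h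
      have h' : DIn g m ([s] ++ γ') (w.map Symbol.terminal) := h
      obtain ⟨m₁, m₂, v₁, v₂, hmn, hv, h₁, h₂⟩ := h'.append_cases
      obtain ⟨w₁, w₂, rfl, rfl, rfl⟩ := map_terminal_append_cases hv
      obtain ⟨trl', htrl', hder'⟩ := ihγ m₂ (by omega) (fun a haa => hγt a (by simp [haa])) w₂ h₂
      cases s with
      | terminal a =>
        have hv₁ := h₁.terminal
        have hw₁ : w₁ = [a] := by
          cases w₁ with
          | nil => simp at hv₁
          | cons x l =>
            simp only [List.map_cons, List.cons.injEq] at hv₁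
            obtain ⟨h1, h2⟩ := hv₁
            cases h1
            cases l with
            | nil => rfl
            | cons y l' => simp at h2
        subst hw₁
        have ha : a ∈ termList g := hγt a (by simp)
        refine ⟨En a :: trl', by
          simp only [trL]; exact List.mem_map.mpr ⟨trl', htrl', rfl⟩, ?_⟩
        have : (HG g).Derives [Symbol.nonterminal (En a)] [Symbol.terminal a] :=
          (produces_rule (rule_E ha)).single
        simpa using derives_append this hder'
      | nonterminal B =>
        cases hw₁ : w₁ with
        | nil =>
          subst hw₁
          have hnull : NullL g [Symbol.nonterminal B] := h₁.derives
          refine ⟨trl', ?_, by simpa using hder'⟩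
          simp only [trL, hnull, if_true, List.mem_append]
          exact .inr htrl'
        | cons c u' =>
          subst hw₁
          have hder₁ := hW m₁ (by omega) B (c :: u') (by simp) h₁
          refine ⟨Wn B :: trl', ?_, ?_⟩
          · simp only [trL, List.mem_append, List.mem_map]
            exact .inl ⟨trl', htrl', rfl⟩
          · simpa using derives_append hder₁ hder'
  have derives_cons_terminal : ∀ {c : T} {l l' : List (Symbol T (NTH g))},
      (HG g).Derives l l' → (HG g).Derives (Symbol.terminal c :: l) (Symbol.terminal c :: l') := by
    intro c l l' hd
    simpa using hd.append_left [Symbol.terminal c]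
  -- expandFirst-helper
  have hEF : ∀ m, m < n → ∀ (γ₂ : List (Symbol T g.NT)),
      (∀ a, Symbol.terminal a ∈ γ₂ → a ∈ termList g) → ∀ (c : T) (y : List T),
      DIn g m γ₂ (Symbol.terminal c :: y.map Symbol.terminal) →
      ∃ e ∈ expandFirst g γ₂, e.1 = c ∧
        (HG g).Derives (e.2.map Symbol.nonterminal) (y.map Symbol.terminal) := by
    intro m hm γ₂ hγt c y h
    obtain ⟨η₁, s, η₂, ρ₁, ρ₂, m₀, m₁, m₂, hsplit, h0, hs, h2, hρ, hsum⟩ := list_decomp h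
    obtain ⟨y₁, y₂, rfl, rfl, rfl⟩ := map_terminal_append_cases hρ
    have hη₂t : ∀ a, Symbol.terminal a ∈ η₂ → a ∈ termList g := fun a haa =>
      hγt a (by rw [hsplit]; simp [haa])
    obtain ⟨trl, htrl, hdtrl⟩ := hTr m₂ (by omega) η₂ hη₂t y₂ h2
    cases s with
    | terminal c' =>
      have hterm := hs.terminal
      have hcc : c' = c ∧ y₁ = [] := by
        cases y₁ with
        | nil =>
          have h1 : (Symbol.terminal c : Symbol T g.NT) = Symbol.terminal c' := by
            simpa using hterm
          cases h1
          exact ⟨rfl, rfl⟩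
        | cons d l => simp at hterm
      obtain ⟨rfl, rfl⟩ := hcc
      exact ⟨(c', trl), mem_expandFirst_t hsplit h0.derives htrl, rfl, by simpa using hdtrl⟩
    | nonterminal C =>
      have hwd : WD g C (c :: y₁) := by
        unfold WD; rw [List.map_cons]; exact hs.derives
      have hc : c ∈ termList g := derived_terminal_mem g hwd (by simp)
      cases y₁ with
      | nil =>
        refine ⟨(c, trl), mem_expandFirst_w hsplit h0.derives hc hwd htrl, rfl, by simpa using hdtrl⟩
      | cons d y₁' =>
        have hq := (ih m₁ (by omega)).1 C c (d :: y₁') (by simp)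
          (by rw [← List.map_cons]; exact hs)
        refine ⟨(c, Qn C c :: trl), mem_expandFirst_q hsplit h0.derives hc htrl, rfl, ?_⟩
        have : (HG g).Derives ([Symbol.nonterminal (Qn C c)] ++ trl.map Symbol.nonterminal)
            (((d :: y₁').map Symbol.terminal) ++ y₂.map Symbol.terminal) := derives_append hq hdtrl
        simpa using this
  constructor
  · -- Q-completeness
    intro B b u hu h
    have hBocc : B ∈ occList g := by
      rcases h.head_cases with ⟨_, habs⟩ | ⟨r, hr, hin, _⟩
      · exact absurd habs (by simp)
      · exact hin ▸ input_mem_occList g hr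
    obtain ⟨X, r, γ₁, γ₂, ρ₁, ρ₂, n₁, n₂, hr, hin, hout, hγ₁, h2, hlc, hρ, hn₁, hn₂⟩ :=
      head_terminal_decomp h
    subst hin
    obtain ⟨u₁, u₂, rfl, rfl, rfl⟩ := map_terminal_append_cases hρ
    have hb : b ∈ termList g := output_t_mem_termList g hr (by rw [hout]; simp)
    have hγ₂t : ∀ a, Symbol.terminal a ∈ γ₂ → a ∈ termList g := fun a haa =>
      output_t_mem_termList g hr (by rw [hout]; simp [haa])
    have hXocc : r.input ∈ occList g := input_mem_occList g hr
    cases u₁ with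
    | nil =>
      have hnull₂ : NullL g γ₂ := h2.derives
      obtain ⟨o, ho, hdo⟩ := (ih n₁ hn₁).2 B r.input u₂ hBocc (by simpa using hu) hlc
      have hmem := rule_Q hBocc hb (mem_QOuts_b hr hout hγ₁ hnull₂ ho)
      exact (produces_rule hmem).trans_derives (by simpa using hdo)
    | cons c u₁' =>
      obtain ⟨e, he, hey, hder⟩ := hEF n₂ hn₂ γ₂ hγ₂t c u₁' (by simpa using h2)
      cases u₂ with
      | nil =>
        have hud : UD g B r.input := by
          have := hlc.derives; simpa [UD] using this
        have hmem := rule_Q hBocc hb (mem_QOuts_a hr hout hγ₁ he (mem_tailOuts₂ e hud))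
        refine (produces_rule hmem).trans_derives ?_
        rw [hey]
        simpa using derives_cons_terminal hder
      | cons d u₂' =>
        have hp : (HG g).Derives [Symbol.nonterminal (Pn B r.input)]
            ((d :: u₂').map Symbol.terminal) := by
          obtain ⟨o, ho, hdo⟩ := (ih n₁ hn₁).2 B r.input (d :: u₂') hBocc (by simp) hlc
          exact (produces_rule (rule_P hBocc hXocc ho)).trans_derives hdo
        have hmem := rule_Q hBocc hb (mem_QOuts_a hr hout hγ₁ he (mem_tailOuts₁ e))
        refine (produces_rule hmem).trans_derives ?_
        rw [hey]
        have hcomb := derives_append hder hp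
        have hcast : ((e.2 ++ [Pn B r.input]).map Symbol.nonterminal : List (Symbol T (NTH g))) =
            e.2.map Symbol.nonterminal ++ [Symbol.nonterminal (Pn B r.input)] := by simp
        rw [hcast]
        simpa using derives_cons_terminal hcomb
  · -- P-completeness
    intro A X v hA hv h
    obtain ⟨X', Y, r, γ₁, γ₂, y, rest, n₁, n₂, hr, hin, hout, hγ₁, hYX, h2, hy, hlc, hveq,
      hn₁, hn₂⟩ := head_nonterminal_decomp h hv
    subst hin
    subst hveq
    obtain ⟨c, y', rfl⟩ : ∃ c y', y = c :: y' := by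
      cases y with | nil => exact absurd rfl hy | cons c y' => exact ⟨c, y', rfl⟩
    have hγ₂t : ∀ a, Symbol.terminal a ∈ γ₂ → a ∈ termList g := fun a haa =>
      output_t_mem_termList g hr (by rw [hout]; simp [haa])
    have hXocc : r.input ∈ occList g := input_mem_occList g hr
    obtain ⟨e, he, hey, hder⟩ := hEF n₂ hn₂ γ₂ hγ₂t c y' (by simpa using h2)
    cases rest with
    | nil =>
      have hud : UD g A r.input := by
        have := hlc.derives; simpa [UD] using this
      refine ⟨_, mem_PCoreOuts hr hout hγ₁ hYX he (mem_tailOuts₂ e hud), ?_⟩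
      rw [hey]
      simpa using derives_cons_terminal hder
    | cons d rest' =>
      have hp : (HG g).Derives [Symbol.nonterminal (Pn A r.input)]
          ((d :: rest').map Symbol.terminal) := by
        obtain ⟨o, ho, hdo⟩ := (ih n₁ hn₁).2 A r.input (d :: rest') hA (by simp) hlc
        exact (produces_rule (rule_P hA hXocc ho)).trans_derives hdo
      refine ⟨_, mem_PCoreOuts hr hout hγ₁ hYX he (mem_tailOuts₁ e), ?_⟩
      rw [hey]
      have hcomb := derives_append hder hp
      have hcast : ((e.2 ++ [Pn A r.input]).map Symbol.nonterminal : List (Symbol T (NTH g))) =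
          e.2.map Symbol.nonterminal ++ [Symbol.nonterminal (Pn A r.input)] := by simp
      rw [hcast]
      simpa using derives_cons_terminal hcomb

end Completeness

section Soundness

open scoped Classical

variable {g : ContextFreeGrammar T}

lemma mem_ite_nil {α : Type*} {c : Prop} [Decidable c] {l : List α} {a : α}
    (h : a ∈ if c then l else []) : c ∧ a ∈ l := by
  split at h
  · exact ⟨by assumption, h⟩
  · simp at h

lemma forall₂_append_cases {α β : Type*} {R : α → β → Prop} {l₁ l₂ : List α} {ws : List β}
    (h : List.Forall₂ R (l₁ ++ l₂) ws) :
    ∃ ws₁ ws₂, ws = ws₁ ++ ws₂ ∧ List.Forall₂ R l₁ ws₁ ∧ List.Forall₂ R l₂ ws₂ := by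
  induction l₁ generalizing ws with
  | nil => exact ⟨[], ws, rfl, List.Forall₂.nil, h⟩
  | cons x l₁ ih =>
    cases h with
    | cons hx h' =>
      obtain ⟨ws₁, ws₂, rfl, h₁, h₂⟩ := ih h'
      exact ⟨_ :: ws₁, ws₂, rfl, List.Forall₂.cons hx h₁, h₂⟩

lemma trL_sound {γ : List (Symbol T g.NT)} {trl : List (NTH g)} {ws : List (List T)}
    (h : trl ∈ trL g γ) (hws : List.Forall₂ (Sem g) trl ws) :
    g.Derives γ (ws.flatten.map Symbol.terminal) := by
  induction γ generalizing trl ws with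
  | nil =>
    simp only [trL, List.mem_singleton] at h
    subst h
    cases hws
    simpa using Derives.refl (g := g) []
  | cons s γ' ih =>
    cases s with
    | terminal a =>
      simp only [trL, List.mem_map] at h
      obtain ⟨trl', htrl', rfl⟩ := h
      cases hws with
      | cons hx h' =>
        have hw₀ : _ = [a] := hx
        subst hw₀
        have : g.Derives ([Symbol.terminal a] ++ γ')
            ([Symbol.terminal a] ++ _) := derives_append (Derives.refl _) (ih htrl' h')
        simpa using this
    | nonterminal B =>
      simp only [trL, List.mem_append, List.mem_map] at h
      rcases h with ⟨trl', htrl', rfl⟩ | h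
      · cases hws with
        | cons hx h' =>
          obtain ⟨hne, hwd⟩ := hx
          have : g.Derives ([Symbol.nonterminal B] ++ γ') (_ ++ _) :=
            derives_append hwd (ih htrl' h')
          simpa using this
      · obtain ⟨hnull, htrl⟩ := mem_ite_nil h
        have : g.Derives ([Symbol.nonterminal B] ++ γ') ([] ++ _) :=
          derives_append hnull (ih htrl hws)
        simpa using this

lemma mem_expandFirst_cases {γ₂ : List (Symbol T g.NT)} {e : T × List (NTH g)}
    (h : e ∈ expandFirst g γ₂) :
    ∃ η₁ s η₂, γ₂ = η₁ ++ s :: η₂ ∧ NullL g η₁ ∧ ∃ trl ∈ trL g η₂,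
      ((s = Symbol.terminal e.1 ∧ e.2 = trl) ∨
       (∃ C, s = Symbol.nonterminal C ∧
         (e.2 = Qn C e.1 :: trl ∨ (WD g C [e.1] ∧ e.2 = trl)))) := by
  simp only [expandFirst, List.mem_flatMap] at h
  obtain ⟨⟨η₁, s, η₂⟩, hp, h2⟩ := h
  have hsplit := mem_splits.mp hp
  obtain ⟨hnull, h2⟩ := mem_ite_nil h2
  simp only [List.mem_flatMap, List.mem_map] at h2
  obtain ⟨cm, hcm, trl, htrl, he⟩ := h2
  refine ⟨η₁, s, η₂, hsplit, hnull, trl, htrl, ?_⟩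
  cases s with
  | terminal c =>
    simp only [List.mem_singleton] at hcm
    subst hcm
    subst he
    exact .inl ⟨rfl, rfl⟩
  | nonterminal C =>
    simp only [List.mem_flatMap, List.mem_cons] at hcm
    obtain ⟨c, hc, hcm⟩ := hcm
    rcases hcm with rfl | hcm
    · subst he
      exact .inr ⟨C, rfl, .inl rfl⟩
    · obtain ⟨hwd, hcm⟩ := mem_ite_nil hcm
      simp only [List.mem_singleton] at hcm
      subst hcm
      subst he
      exact .inr ⟨C, rfl, .inr ⟨hwd, rfl⟩⟩

lemma expandFirst_sound {γ₂ : List (Symbol T g.NT)} {e : T × List (NTH g)} {ws : List (List T)}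
    (he : e ∈ expandFirst g γ₂) (hws : List.Forall₂ (Sem g) e.2 ws) :
    g.Derives γ₂ (Symbol.terminal e.1 :: ws.flatten.map Symbol.terminal) := by
  obtain ⟨η₁, s, η₂, rfl, hnull, trl, htrl, hcase⟩ := mem_expandFirst_cases he
  rcases hcase with ⟨rfl, he2⟩ | ⟨C, rfl, hmid⟩
  · rw [he2] at hws
    have : g.Derives (η₁ ++ ([Symbol.terminal e.1] ++ η₂))
        ([] ++ ([Symbol.terminal e.1] ++ ws.flatten.map Symbol.terminal)) :=
      derives_append hnull (derives_append (Derives.refl _) (trL_sound htrl hws))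
    simpa using this
  · rcases hmid with he2 | ⟨hwd, he2⟩
    · rw [he2] at hws
      cases hws with
      | cons hx h' =>
        obtain ⟨hne, hq⟩ := hx
        have : g.Derives (η₁ ++ ([Symbol.nonterminal C] ++ η₂))
            ([] ++ (((e.1 :: _).map Symbol.terminal) ++ _)) :=
          derives_append hnull (derives_append hq (trL_sound htrl h'))
        simpa using this
    · rw [he2] at hws
      have : g.Derives (η₁ ++ ([Symbol.nonterminal C] ++ η₂))
          ([] ++ (([e.1].map Symbol.terminal) ++ _)) :=
        derives_append hnull (derives_append hwd (trL_sound htrl hws))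
      simpa using this

lemma mem_PCoreOuts_cases {A X : g.NT} {o : List (Symbol T (NTH g))}
    (h : o ∈ PCoreOuts g A X) :
    ∃ r ∈ g.rules, ∃ γ₁ Y γ₂, r.output = γ₁ ++ Symbol.nonterminal Y :: γ₂ ∧ NullL g γ₁ ∧
      UD g Y X ∧ ∃ e ∈ expandFirst g γ₂,
        (o = Symbol.terminal e.1 :: (e.2 ++ [Pn A r.input]).map Symbol.nonterminal ∨
         (UD g A r.input ∧ o = Symbol.terminal e.1 :: e.2.map Symbol.nonterminal)) := by
  simp only [PCoreOuts, List.mem_flatMap, Finset.mem_toList] at h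
  obtain ⟨r, hr, ⟨γ₁, s, γ₂⟩, hp, h2⟩ := h
  have hsplit := mem_splits.mp hp
  cases s with
  | terminal c => simp at h2
  | nonterminal Y =>
    obtain ⟨⟨hnull, hud⟩, h2⟩ := mem_ite_nil h2
    simp only [List.mem_flatMap] at h2
    obtain ⟨e, he, ho⟩ := h2
    refine ⟨r, hr, γ₁, Y, γ₂, hsplit, hnull, hud, e, he, ?_⟩
    simp only [tailOuts, List.mem_cons] at ho
    rcases ho with rfl | ho
    · exact .inl rfl
    · obtain ⟨hud', ho⟩ := mem_ite_nil ho
      simp only [List.mem_singleton] at ho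
      exact .inr ⟨hud', ho⟩

lemma mem_QOuts_cases {B : g.NT} {b : T} {o : List (Symbol T (NTH g))}
    (h : o ∈ QOuts g B b) :
    ∃ r ∈ g.rules, ∃ γ₁ γ₂, r.output = γ₁ ++ Symbol.terminal b :: γ₂ ∧ NullL g γ₁ ∧
      ((∃ e ∈ expandFirst g γ₂,
        (o = Symbol.terminal e.1 :: (e.2 ++ [Pn B r.input]).map Symbol.nonterminal ∨
         (UD g B r.input ∧ o = Symbol.terminal e.1 :: e.2.map Symbol.nonterminal))) ∨
       (NullL g γ₂ ∧ o ∈ PCoreOuts g B r.input)) := by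
  simp only [QOuts, List.mem_flatMap, Finset.mem_toList] at h
  obtain ⟨r, hr, ⟨γ₁, s, γ₂⟩, hp, h2⟩ := h
  have hsplit := mem_splits.mp hp
  obtain ⟨⟨hs, hnull⟩, h2⟩ := mem_ite_nil h2
  subst hs
  refine ⟨r, hr, γ₁, γ₂, hsplit, hnull, ?_⟩
  simp only [List.mem_append, List.mem_flatMap] at h2
  rcases h2 with ⟨e, he, ho⟩ | h2
  · refine .inl ⟨e, he, ?_⟩
    simp only [tailOuts, List.mem_cons] at ho
    rcases ho with rfl | ho
    · exact .inl rfl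
    · obtain ⟨hud', ho⟩ := mem_ite_nil ho
      simp only [List.mem_singleton] at ho
      exact .inr ⟨hud', ho⟩
  · obtain ⟨hnull₂, ho⟩ := mem_ite_nil h2
    exact .inr ⟨hnull₂, ho⟩

end Soundness

section Soundness2

open scoped Classical

variable {g : ContextFreeGrammar T}

lemma map_terminal_eq_single {N : Type uN} {w : List T} {a : T}
    (h : w.map (Symbol.terminal : T → Symbol T N) = [Symbol.terminal a]) : w = [a] := by
  cases w with
  | nil => simp at h
  | cons x l =>
    simp only [List.map_cons, List.cons.injEq] at h
    obtain ⟨h1, h2⟩ := h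
    cases h1
    simp only [List.map_eq_nil_iff] at h2
    rw [h2]

lemma list_sem {m : ℕ}
    (sem : ∀ m' ≤ m, ∀ (ν : NTH g) (w' : List T),
      DIn (HG g) m' [Symbol.nonterminal ν] (w'.map Symbol.terminal) → Sem g ν w') :
    ∀ m' ≤ m, ∀ (ns : List (NTH g)) (w : List T),
      DIn (HG g) m' (ns.map Symbol.nonterminal) (w.map Symbol.terminal) →
      ∃ ws, w = ws.flatten ∧ List.Forall₂ (Sem g) ns ws := by
  intro m' hm' ns
  induction ns generalizing m' with
  | nil =>
    intro w h
    have := h.nil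
    have hw : w = [] := by cases w <;> simp_all
    exact ⟨[], by simp [hw], List.Forall₂.nil⟩
  | cons ν ns ih =>
    intro w h
    have h' : DIn (HG g) m' ([Symbol.nonterminal ν] ++ ns.map Symbol.nonterminal)
        (w.map Symbol.terminal) := by simpa using h
    obtain ⟨m₁, m₂, v₁, v₂, hmn, hv, h₁, h₂⟩ := h'.append_cases
    obtain ⟨w₁, w₂, rfl, rfl, rfl⟩ := map_terminal_append_cases hv
    have s₁ := sem m₁ (by omega) ν w₁ h₁
    obtain ⟨ws, rfl, hf⟩ := ih m₂ (by omega) w₂ h₂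
    exact ⟨w₁ :: ws, by simp, List.Forall₂.cons s₁ hf⟩

lemma PCore_sound {m : ℕ} {A X : g.NT} {o : List (Symbol T (NTH g))} {w : List T}
    (sem : ∀ m' ≤ m, ∀ (ν : NTH g) (w' : List T),
      DIn (HG g) m' [Symbol.nonterminal ν] (w'.map Symbol.terminal) → Sem g ν w')
    (ho : o ∈ PCoreOuts g A X) (hd : DIn (HG g) m o (w.map Symbol.terminal)) :
    w ≠ [] ∧ g.Derives [Symbol.nonterminal A]
      (Symbol.nonterminal X :: w.map Symbol.terminal) := by
  obtain ⟨r, hr, γ₁, Y, γ₂, hout, hnull, hYX, e, he, hcase⟩ := mem_PCoreOuts_cases ho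
  -- common part : extract head terminal and the nonterminal pieces
  have main : ∀ (NS : List (NTH g)), o = Symbol.terminal e.1 :: NS.map Symbol.nonterminal →
      ∃ w', w = e.1 :: w' ∧ ∃ ws, w' = ws.flatten ∧ List.Forall₂ (Sem g) NS ws := by
    intro NS hNS
    subst hNS
    have hd' : DIn (HG g) m ([Symbol.terminal e.1] ++ NS.map Symbol.nonterminal)
        (w.map Symbol.terminal) := by simpa using hd
    obtain ⟨m₁, m₂, v₁, v₂, hmn, hv, h₁, h₂⟩ := hd'.append_cases
    obtain ⟨w₁, w₂, rfl, rfl, rfl⟩ := map_terminal_append_cases hv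
    have hw₁ : w₁ = [e.1] := map_terminal_eq_single h₁.terminal
    subst hw₁
    obtain ⟨ws, rfl, hf⟩ := list_sem sem m₂ (by omega) NS w₂ h₂
    exact ⟨ws.flatten, rfl, ws, rfl, hf⟩
  -- build the derivation given tail data
  have build : ∀ (wp : List T) (ws₁ : List (List T)),
      List.Forall₂ (Sem g) e.2 ws₁ →
      g.Derives [Symbol.nonterminal A] (Symbol.nonterminal r.input :: wp.map Symbol.terminal) →
      g.Derives [Symbol.nonterminal A] (Symbol.nonterminal X ::
        (e.1 :: (ws₁.flatten ++ wp)).map Symbol.terminal) := by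
    intro wp ws₁ hws₁ hA2
    have hstep : g.Produces (Symbol.nonterminal r.input :: wp.map Symbol.terminal)
        (r.output ++ wp.map Symbol.terminal) := ⟨r, hr, ContextFreeRule.Rewrites.head _⟩
    have hbig : g.Derives (γ₁ ++ ([Symbol.nonterminal Y] ++ (γ₂ ++ wp.map Symbol.terminal)))
        ([] ++ ([Symbol.nonterminal X] ++
          ((Symbol.terminal e.1 :: ws₁.flatten.map Symbol.terminal) ++
            wp.map Symbol.terminal))) :=
      derives_append hnull (derives_append hYX
        (derives_append (expandFirst_sound he hws₁) (Derives.refl _)))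
    refine hA2.trans (hstep.trans_derives ?_)
    rw [hout]
    simpa using hbig
  rcases hcase with hNS | ⟨hud, hNS⟩
  · obtain ⟨w', rfl, ws, rfl, hf⟩ := main _ hNS
    obtain ⟨ws₁, ws₂, rfl, hf₁, hf₂⟩ := forall₂_append_cases hf
    cases hf₂ with
    | cons hx hnil =>
      cases hnil
      obtain ⟨hne, hp⟩ := hx
      refine ⟨by simp, ?_⟩
      have := build _ _ hf₁ hp
      simpa using this
  · obtain ⟨w', rfl, ws, rfl, hf⟩ := main _ hNS
    refine ⟨by simp, ?_⟩
    have := build [] _ hf (by simpa [UD] using hud)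
    simpa using this

lemma QOut_sound {m : ℕ} {B : g.NT} {b : T} {o : List (Symbol T (NTH g))} {w : List T}
    (sem : ∀ m' ≤ m, ∀ (ν : NTH g) (w' : List T),
      DIn (HG g) m' [Symbol.nonterminal ν] (w'.map Symbol.terminal) → Sem g ν w')
    (ho : o ∈ QOuts g B b) (hd : DIn (HG g) m o (w.map Symbol.terminal)) :
    w ≠ [] ∧ WD g B (b :: w) := by
  obtain ⟨r, hr, γ₁, γ₂, hout, hnull, hcase⟩ := mem_QOuts_cases ho
  rcases hcase with ⟨e, he, hNScase⟩ | ⟨hnull₂, hoP⟩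
  · have main : ∀ (NS : List (NTH g)), o = Symbol.terminal e.1 :: NS.map Symbol.nonterminal →
        ∃ w', w = e.1 :: w' ∧ ∃ ws, w' = ws.flatten ∧ List.Forall₂ (Sem g) NS ws := by
      intro NS hNS
      subst hNS
      have hd' : DIn (HG g) m ([Symbol.terminal e.1] ++ NS.map Symbol.nonterminal)
          (w.map Symbol.terminal) := by simpa using hd
      obtain ⟨m₁, m₂, v₁, v₂, hmn, hv, h₁, h₂⟩ := hd'.append_cases
      obtain ⟨w₁, w₂, rfl, rfl, rfl⟩ := map_terminal_append_cases hv
      have hw₁ : w₁ = [e.1] := map_terminal_eq_single h₁.terminal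
      subst hw₁
      obtain ⟨ws, rfl, hf⟩ := list_sem sem m₂ (by omega) NS w₂ h₂
      exact ⟨ws.flatten, rfl, ws, rfl, hf⟩
    have build : ∀ (wp : List T) (ws₁ : List (List T)),
        List.Forall₂ (Sem g) e.2 ws₁ →
        g.Derives [Symbol.nonterminal B]
          (Symbol.nonterminal r.input :: wp.map Symbol.terminal) →
        WD g B (b :: e.1 :: (ws₁.flatten ++ wp)) := by
      intro wp ws₁ hws₁ hA2
      have hstep : g.Produces (Symbol.nonterminal r.input :: wp.map Symbol.terminal)
          (r.output ++ wp.map Symbol.terminal) := ⟨r, hr, ContextFreeRule.Rewrites.head _⟩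
      have hbig : g.Derives (γ₁ ++ ([Symbol.terminal b] ++ (γ₂ ++ wp.map Symbol.terminal)))
          ([] ++ ([Symbol.terminal b] ++
            ((Symbol.terminal e.1 :: ws₁.flatten.map Symbol.terminal) ++
              wp.map Symbol.terminal))) :=
        derives_append hnull (derives_append (Derives.refl _)
          (derives_append (expandFirst_sound he hws₁) (Derives.refl _)))
      refine hA2.trans (hstep.trans_derives ?_)
      rw [hout]
      simpa using hbig
    rcases hNScase with hNS | ⟨hud, hNS⟩
    · obtain ⟨w', rfl, ws, rfl, hf⟩ := main _ hNS
      obtain ⟨ws₁, ws₂, rfl, hf₁, hf₂⟩ := forall₂_append_cases hf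
      cases hf₂ with
      | cons hx hnil =>
        cases hnil
        obtain ⟨hne, hp⟩ := hx
        refine ⟨by simp, ?_⟩
        have := build _ _ hf₁ hp
        simpa using this
    · obtain ⟨w', rfl, ws, rfl, hf⟩ := main _ hNS
      refine ⟨by simp, ?_⟩
      have := build [] _ hf (by simpa [UD] using hud)
      simpa using this
  · obtain ⟨hne, hP⟩ := PCore_sound sem hoP hd
    refine ⟨hne, ?_⟩
    have hstep : g.Produces (Symbol.nonterminal r.input :: w.map Symbol.terminal)
        (r.output ++ w.map Symbol.terminal) := ⟨r, hr, ContextFreeRule.Rewrites.head _⟩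
    have hbig : g.Derives (γ₁ ++ ([Symbol.terminal b] ++ (γ₂ ++ w.map Symbol.terminal)))
        ([] ++ ([Symbol.terminal b] ++ ([] ++ w.map Symbol.terminal))) :=
      derives_append hnull (derives_append (Derives.refl _)
        (derives_append hnull₂ (Derives.refl _)))
    refine hP.trans (hstep.trans_derives ?_)
    rw [hout]
    simpa using hbig

lemma rulesL_cases {r : ContextFreeRule T (NTH g)} (h : r ∈ rulesL g) :
    (r.input = none ∧ r.output = [] ∧ NullL g [Symbol.nonterminal g.initial]) ∨
    (∃ a, r.input = none ∧ r.output = [Symbol.terminal a] ∧ WD g g.initial [a]) ∨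
    (∃ a, r.input = none ∧
      r.output = [Symbol.terminal a, Symbol.nonterminal (Qn g.initial a)]) ∨
    (∃ a, r.input = En a ∧ r.output = [Symbol.terminal a]) ∨
    (∃ B a, r.input = Wn B ∧ r.output = [Symbol.terminal a] ∧ WD g B [a]) ∨
    (∃ B a, r.input = Wn B ∧ r.output = [Symbol.terminal a, Symbol.nonterminal (Qn B a)]) ∨
    (∃ B b, r.input = Qn B b ∧ r.output ∈ QOuts g B b) ∨
    (∃ A X, r.input = Pn A X ∧ r.output ∈ PCoreOuts g A X) := by
  unfold rulesL at h
  simp only [List.mem_append, List.mem_flatMap, List.mem_cons, List.mem_map] at h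
  rcases h with ((((h | h) | h) | h) | h)
  · obtain ⟨hc, h⟩ := mem_ite_nil h
    simp only [List.mem_singleton] at h
    subst h
    exact .inl ⟨rfl, rfl, hc⟩
  · obtain ⟨a, ha, h⟩ := h
    rcases h with rfl | h
    · exact .inr <| .inr <| .inr <| .inl ⟨a, rfl, rfl⟩
    rcases h with rfl | h
    · exact .inr <| .inr <| .inl ⟨a, rfl, rfl⟩
    · obtain ⟨hc, h⟩ := mem_ite_nil h
      simp only [List.mem_singleton] at h
      subst h
      exact .inr <| .inl ⟨a, rfl, rfl, hc⟩
  · obtain ⟨B, hB, a, ha, h⟩ := h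
    rcases h with rfl | h
    · exact .inr <| .inr <| .inr <| .inr <| .inr <| .inl ⟨B, a, rfl, rfl⟩
    · obtain ⟨hc, h⟩ := mem_ite_nil h
      simp only [List.mem_singleton] at h
      subst h
      exact .inr <| .inr <| .inr <| .inr <| .inl ⟨B, a, rfl, rfl, hc⟩
  · obtain ⟨B, hB, b, hb, o, ho, rfl⟩ := h
    exact .inr <| .inr <| .inr <| .inr <| .inr <| .inr <| .inl ⟨B, b, rfl, ho⟩
  · obtain ⟨A, hA, X, hX, o, ho, rfl⟩ := h
    exact .inr <| .inr <| .inr <| .inr <| .inr <| .inr <| .inr ⟨A, X, rfl, ho⟩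

theorem soundness : ∀ (n : ℕ) (ν : NTH g) (w : List T),
    DIn (HG g) n [Symbol.nonterminal ν] (w.map Symbol.terminal) → Sem g ν w := by
  intro n
  induction n using Nat.strong_induction_on with
  | _ n ihn =>
  intro ν w h
  rcases h.head_cases with ⟨rfl, habs⟩ | ⟨r, hr, hin, m, hm, hd⟩
  · exfalso
    cases w <;> simp at habs
  have sem : ∀ m' ≤ m, ∀ (ν' : NTH g) (w' : List T),
      DIn (HG g) m' [Symbol.nonterminal ν'] (w'.map Symbol.terminal) → Sem g ν' w' :=
    fun m' hm' => ihn m' (by omega)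
  have hro := mem_HG_rules.mp hr
  rcases rulesL_cases hro with ⟨hi, ho, hc⟩ | ⟨a, hi, ho, hc⟩ | ⟨a, hi, ho⟩ | ⟨a, hi, ho⟩ |
    ⟨B, a, hi, ho, hc⟩ | ⟨B, a, hi, ho⟩ | ⟨B, b, hi, ho⟩ | ⟨A, X, hi, ho⟩ <;>
    rw [hi] at hin <;> subst hin
  · -- S → ε
    rw [ho] at hd
    have hnil := hd.nil
    have hw : w = [] := by cases w <;> simp_all
    subst hw
    exact hc
  · -- S → a
    rw [ho] at hd
    have hw : w = [a] := map_terminal_eq_single hd.terminal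
    subst hw
    exact hc
  · -- S → a Q(S,a)
    rw [ho] at hd
    have hd' : DIn (HG g) m ([Symbol.terminal a] ++ [Symbol.nonterminal (Qn g.initial a)])
        (w.map Symbol.terminal) := by simpa using hd
    obtain ⟨m₁, m₂, v₁, v₂, hmn, hv, h₁, h₂⟩ := hd'.append_cases
    obtain ⟨w₁, w₂, rfl, rfl, rfl⟩ := map_terminal_append_cases hv
    have hw₁ : w₁ = [a] := map_terminal_eq_single h₁.terminal
    subst hw₁
    have hsem := sem m₂ (by omega) (Qn g.initial a) w₂ h₂
    obtain ⟨hne, hwd⟩ := hsem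
    exact hwd
  · -- E a → a
    rw [ho] at hd
    exact map_terminal_eq_single hd.terminal
  · -- W B → a
    rw [ho] at hd
    have hw : w = [a] := map_terminal_eq_single hd.terminal
    subst hw
    exact ⟨by simp, hc⟩
  · -- W B → a Q(B,a)
    rw [ho] at hd
    have hd' : DIn (HG g) m ([Symbol.terminal a] ++ [Symbol.nonterminal (Qn B a)])
        (w.map Symbol.terminal) := by simpa using hd
    obtain ⟨m₁, m₂, v₁, v₂, hmn, hv, h₁, h₂⟩ := hd'.append_cases
    obtain ⟨w₁, w₂, rfl, rfl, rfl⟩ := map_terminal_append_cases hv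
    have hw₁ : w₁ = [a] := map_terminal_eq_single h₁.terminal
    subst hw₁
    obtain ⟨hne, hwd⟩ := sem m₂ (by omega) (Qn B a) w₂ h₂
    exact ⟨by simp, hwd⟩
  · -- Q rules
    exact QOut_sound sem ho hd
  · -- P rules
    exact PCore_sound sem ho hd

end Soundness2

section LangEq

open scoped Classical

variable {g : ContextFreeGrammar T}

theorem HG_language (g : ContextFreeGrammar T) : (HG g).language = g.language := by
  ext w
  rw [mem_language_iff, mem_language_iff]
  constructor
  · intro h
    obtain ⟨n, hn⟩ := derives_iff_DIn.mp h
    exact soundness n none w hn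
  · intro h
    cases w with
    | nil => exact (produces_rule (rule_eps h)).single
    | cons a u =>
      have ha : a ∈ termList g := derived_terminal_mem g h (by simp)
      cases u with
      | nil => exact (produces_rule (rule_S_single ha h)).single
      | cons d u' =>
        obtain ⟨n, hn⟩ := derives_iff_DIn.mp h
        have hq := (completeness n).1 g.initial a (d :: u') (by simp) (by simpa using hn)
        refine (produces_rule (rule_S_q ha)).trans_derives ?_
        have := derives_append (Derives.refl [(Symbol.terminal a : Symbol T (NTH g))]) hq
        simpa using this

lemma trL_ne_none {γ : List (Symbol T g.NT)} {trl : List (NTH g)} (h : trl ∈ trL g γ) :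
    (none : NTH g) ∉ trl := by
  induction γ generalizing trl with
  | nil =>
    simp only [trL, List.mem_singleton] at h
    subst h
    simp
  | cons s γ' ih =>
    cases s with
    | terminal a =>
      simp only [trL, List.mem_map] at h
      obtain ⟨trl', htrl', rfl⟩ := h
      simp only [List.mem_cons, not_or]
      exact ⟨by simp [En], ih htrl'⟩
    | nonterminal B =>
      simp only [trL, List.mem_append, List.mem_map] at h
      rcases h with ⟨trl', htrl', rfl⟩ | h
      · simp only [List.mem_cons, not_or]
        exact ⟨by simp [Wn], ih htrl'⟩
      · exact ih (mem_ite_nil h).2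

lemma expandFirst_ne_none {γ₂ : List (Symbol T g.NT)} {e : T × List (NTH g)}
    (h : e ∈ expandFirst g γ₂) : (none : NTH g) ∉ e.2 := by
  obtain ⟨η₁, s, η₂, _, _, trl, htrl, hcase⟩ := mem_expandFirst_cases h
  rcases hcase with ⟨_, he2⟩ | ⟨C, _, he2 | ⟨_, he2⟩⟩
  · exact he2 ▸ trL_ne_none htrl
  · rw [he2]
    simp only [List.mem_cons, not_or]
    exact ⟨by simp [Qn], trL_ne_none htrl⟩
  · exact he2 ▸ trL_ne_none htrl

lemma PCoreOuts_shape {A X : g.NT} {o : List (Symbol T (NTH g))} (h : o ∈ PCoreOuts g A X) :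
    ∃ (c : T) (ns : List (NTH g)), o = Symbol.terminal c :: ns.map Symbol.nonterminal ∧ (none : NTH g) ∉ ns := by
  obtain ⟨r, _, γ₁, Y, γ₂, _, _, _, e, he, hcase⟩ := mem_PCoreOuts_cases h
  rcases hcase with rfl | ⟨_, rfl⟩
  · refine ⟨e.1, e.2 ++ [Pn A r.input], rfl, ?_⟩
    simp only [List.mem_append, List.mem_singleton, not_or]
    exact ⟨expandFirst_ne_none he, by simp [Pn]⟩
  · exact ⟨e.1, e.2, rfl, expandFirst_ne_none he⟩

lemma QOuts_shape {B : g.NT} {b : T} {o : List (Symbol T (NTH g))} (h : o ∈ QOuts g B b) :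
    ∃ (c : T) (ns : List (NTH g)), o = Symbol.terminal c :: ns.map Symbol.nonterminal ∧ (none : NTH g) ∉ ns := by
  obtain ⟨r, _, γ₁, γ₂, _, _, hcase⟩ := mem_QOuts_cases h
  rcases hcase with ⟨e, he, rfl | ⟨_, rfl⟩⟩ | ⟨_, hoP⟩
  · refine ⟨e.1, e.2 ++ [Pn B r.input], rfl, ?_⟩
    simp only [List.mem_append, List.mem_singleton, not_or]
    exact ⟨expandFirst_ne_none he, by simp [Pn]⟩
  · exact ⟨e.1, e.2, rfl, expandFirst_ne_none he⟩
  · exact PCoreOuts_shape hoP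

lemma HG_shape : ∀ r ∈ (HG g).rules,
    (r.input = (HG g).initial ∧ r.output = []) ∨
    ∃ (a : T) (δ : List (NTH g)), r.output = Symbol.terminal a :: δ.map Symbol.nonterminal ∧
      (none : NTH g) ∉ δ := by
  intro r hr
  rcases rulesL_cases (mem_HG_rules.mp hr) with ⟨hi, ho, _⟩ | ⟨a, hi, ho, _⟩ | ⟨a, hi, ho⟩ |
    ⟨a, hi, ho⟩ | ⟨B, a, hi, ho, _⟩ | ⟨B, a, hi, ho⟩ | ⟨B, b, hi, ho⟩ | ⟨A, X, hi, ho⟩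
  · exact .inl ⟨hi, ho⟩
  · exact .inr ⟨a, [], by simp [ho]⟩
  · exact .inr ⟨a, [Qn g.initial a], by simp [ho, Qn]⟩
  · exact .inr ⟨a, [], by simp [ho]⟩
  · exact .inr ⟨a, [], by simp [ho]⟩
  · exact .inr ⟨a, [Qn B a], by simp [ho, Qn]⟩
  · obtain ⟨c, ns, hsh, hn⟩ := QOuts_shape ho
    exact .inr ⟨c, ns, hsh, hn⟩
  · obtain ⟨c, ns, hsh, hn⟩ := PCoreOuts_shape ho
    exact .inr ⟨c, ns, hsh, hn⟩

lemma HG_no_initial : ∀ r ∈ (HG g).rules,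
    Symbol.nonterminal (HG g).initial ∉ r.output := by
  intro r hr
  rcases HG_shape r hr with ⟨_, ho⟩ | ⟨a, δ, ho, hn⟩
  · simp [ho]
  · rw [ho]
    simp only [List.mem_cons, not_or]
    refine ⟨by simp, ?_⟩
    intro hmem
    simp only [List.mem_map] at hmem
    obtain ⟨ν, hν, hh⟩ := hmem
    have h' : ν = (none : NTH g) := by injection hh
    exact hn (h' ▸ hν)

end LangEq

section TwoGNFPass

open scoped Classical

lemma derives_of_rules_derivable {k : ContextFreeGrammar T}
    {R : Finset (ContextFreeRule T k.NT)}
    (hsim : ∀ r ∈ R, k.Derives [Symbol.nonterminal r.input] r.output)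
    {u v : List (Symbol T k.NT)}
    (h : (ContextFreeGrammar.mk k.NT k.initial R).Derives u v) : k.Derives u v := by
  induction h with
  | refl => rfl
  | tail _ hp ih =>
    obtain ⟨r, hr, hrw⟩ := hp
    obtain ⟨p, q, rfl, rfl⟩ := hrw.exists_parts
    refine ih.trans ?_
    have := ((hsim r hr).append_left p).append_right q
    simpa using this

variable (k : ContextFreeGrammar T)

noncomputable def stepOuts (r : ContextFreeRule T k.NT) : List (ContextFreeRule T k.NT) :=
  match r.output with
  | Symbol.terminal a :: Symbol.nonterminal B :: rest =>
      k.rules.toList.filterMap (fun r₂ =>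
        if r₂.input = B then
          match r₂.output with
          | Symbol.terminal b :: rest₂ =>
              some ⟨r.input, Symbol.terminal a :: Symbol.terminal b :: (rest₂ ++ rest)⟩
          | _ => none
        else none)
  | _ => [r]

@[reducible] noncomputable def TwoG : ContextFreeGrammar T :=
  ⟨k.NT, k.initial, (k.rules.toList.flatMap (stepOuts k)).toFinset⟩

variable {k}

lemma mem_TwoG {r r' : ContextFreeRule T k.NT} (hr : r ∈ k.rules)
    (h : r' ∈ stepOuts k r) : r' ∈ (TwoG k).rules := by
  simp only [TwoG, List.mem_toFinset, List.mem_flatMap, Finset.mem_toList]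
  exact ⟨r, hr, h⟩

lemma mem_TwoG_cases {r' : ContextFreeRule T k.NT} (h : r' ∈ (TwoG k).rules) :
    ∃ r ∈ k.rules, r' ∈ stepOuts k r := by
  simpa only [TwoG, List.mem_toFinset, List.mem_flatMap, Finset.mem_toList] using h

lemma mem_stepOuts_eps {r : ContextFreeRule T k.NT} (h : r.output = []) :
    r ∈ stepOuts k r := by
  obtain ⟨i, o⟩ := r
  simp only at h
  subst h
  simp [stepOuts]

lemma mem_stepOuts_single {r : ContextFreeRule T k.NT} {a : T}
    (h : r.output = [Symbol.terminal a]) : r ∈ stepOuts k r := by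
  obtain ⟨i, o⟩ := r
  simp only at h
  subst h
  simp [stepOuts]

lemma mem_stepOuts_comp {r r₂ : ContextFreeRule T k.NT} {a b : T} {B : k.NT}
    {rest rest₂ : List (Symbol T k.NT)}
    (hout : r.output = Symbol.terminal a :: Symbol.nonterminal B :: rest)
    (hr₂ : r₂ ∈ k.rules) (hin₂ : r₂.input = B)
    (hout₂ : r₂.output = Symbol.terminal b :: rest₂) :
    (⟨r.input, Symbol.terminal a :: Symbol.terminal b :: (rest₂ ++ rest)⟩ :
      ContextFreeRule T k.NT) ∈ stepOuts k r := by
  obtain ⟨i, o⟩ := r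
  simp only at hout
  subst hout
  simp only [stepOuts, List.mem_filterMap, Finset.mem_toList]
  refine ⟨r₂, hr₂, ?_⟩
  obtain ⟨i₂, o₂⟩ := r₂
  simp only at hin₂ hout₂
  subst hin₂
  subst hout₂
  simp

lemma stepOuts_cases {r r' : ContextFreeRule T k.NT} (h : r' ∈ stepOuts k r) :
    (r' = r ∧ ∀ (a : T) (B : k.NT) rest,
      r.output ≠ Symbol.terminal a :: Symbol.nonterminal B :: rest) ∨
    (∃ (a b : T) (B : k.NT) (rest rest₂ : List (Symbol T k.NT))
      (r₂ : ContextFreeRule T k.NT), r₂ ∈ k.rules ∧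
      r.output = Symbol.terminal a :: Symbol.nonterminal B :: rest ∧
      r₂.input = B ∧ r₂.output = Symbol.terminal b :: rest₂ ∧
      r' = ⟨r.input, Symbol.terminal a :: Symbol.terminal b :: (rest₂ ++ rest)⟩) := by
  obtain ⟨i, o⟩ := r
  rcases o with _ | ⟨s₁, o'⟩
  · exact .inl ⟨by simpa [stepOuts] using h, by simp⟩
  rcases o' with _ | ⟨s₂, rest⟩
  · refine .inl ⟨?_, by simp⟩
    cases s₁ <;> simpa [stepOuts] using h
  cases s₁ with
  | nonterminal X => exact .inl ⟨by simpa [stepOuts] using h, by simp⟩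
  | terminal a =>
    cases s₂ with
    | terminal b' => exact .inl ⟨by simpa [stepOuts] using h, by simp⟩
    | nonterminal B =>
      right
      simp only [stepOuts, List.mem_filterMap, Finset.mem_toList] at h
      obtain ⟨⟨i₂, o₂⟩, hmem, heq⟩ := h
      by_cases hi₂ : i₂ = B
      · simp only [if_pos hi₂] at heq
        rcases o₂ with _ | ⟨s₃, o₂'⟩
        · simp at heq
        cases s₃ with
        | nonterminal Y => simp at heq
        | terminal b =>
          simp only [Option.some.injEq] at heq
          exact ⟨a, b, B, rest, o₂', ⟨i₂, Symbol.terminal b :: o₂'⟩, hmem, rfl, hi₂, rfl,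
            heq.symm⟩
      · simp [hi₂] at heq

lemma TwoG_shape
    (hshape : ∀ r ∈ k.rules, (r.input = k.initial ∧ r.output = []) ∨
      ∃ (a : T) (δ : List k.NT), r.output = Symbol.terminal a :: δ.map Symbol.nonterminal)
    (hni : ∀ r ∈ k.rules, Symbol.nonterminal k.initial ∉ r.output) :
    (TwoG k).InTwoGNF := by
  constructor
  · intro r' hr'
    obtain ⟨r, hr, hst⟩ := mem_TwoG_cases hr'
    rcases stepOuts_cases hst with ⟨rfl, _⟩ | ⟨a, b, B, rest, rest₂, r₂, hr₂, hout, hin₂, hout₂, rfl⟩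
    · exact hni _ hr
    · simp only [List.mem_cons, not_or]
      refine ⟨by simp, by simp, ?_⟩
      intro hm
      rcases List.mem_append.mp hm with hm | hm
      · exact hni r₂ hr₂ (hout₂ ▸ List.mem_cons_of_mem _ hm)
      · exact hni r hr (hout ▸ List.mem_cons_of_mem _ (List.mem_cons_of_mem _ hm))
  · intro r' hr'
    obtain ⟨r, hr, hst⟩ := mem_TwoG_cases hr'
    rcases stepOuts_cases hst with ⟨rfl, hnomatch⟩ |
      ⟨a, b, B, rest, rest₂, r₂, hr₂, hout, hin₂, hout₂, rfl⟩
    · rcases hshape _ hr with ⟨hi, ho⟩ | ⟨a, δ, ho⟩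
      · exact .inl ⟨hi, ho⟩
      · cases δ with
        | nil => exact .inr (.inl ⟨a, by simpa using ho⟩)
        | cons B δ₂ => exact absurd ho (by simpa using hnomatch a B (δ₂.map Symbol.nonterminal))
    · right; right
      have hB : B ≠ k.initial := by
        intro hB
        exact hni r hr (hout ▸ hB ▸ List.mem_cons_of_mem _ List.mem_cons_self)
      obtain ⟨δ₂, hδ₂⟩ : ∃ δ₂ : List k.NT, rest = δ₂.map Symbol.nonterminal := by
        rcases hshape r hr with ⟨_, ho⟩ | ⟨a', δ, ho⟩
        · rw [ho] at hout; simp at hout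
        · rw [ho] at hout
          simp only [List.cons.injEq] at hout
          obtain ⟨_, hδ⟩ := hout
          cases δ with
          | nil => simp at hδ
          | cons C δ₂ =>
            simp only [List.map_cons, List.cons.injEq] at hδ
            exact ⟨δ₂, hδ.2.symm⟩
      obtain ⟨δ', hδ'⟩ : ∃ δ' : List k.NT, rest₂ = δ'.map Symbol.nonterminal := by
        rcases hshape r₂ hr₂ with ⟨hi₂, ho₂⟩ | ⟨b', δ, ho₂⟩
        · exact absurd (hin₂ ▸ hi₂) hB
        · rw [ho₂] at hout₂
          simp only [List.cons.injEq] at hout₂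
          exact ⟨δ, hout₂.2.symm⟩
      exact ⟨a, b, δ' ++ δ₂, by simp [hδ₂, hδ']⟩

lemma TwoG_language
    (hshape : ∀ r ∈ k.rules, (r.input = k.initial ∧ r.output = []) ∨
      ∃ (a : T) (δ : List k.NT), r.output = Symbol.terminal a :: δ.map Symbol.nonterminal)
    (hni : ∀ r ∈ k.rules, Symbol.nonterminal k.initial ∉ r.output) :
    (TwoG k).language = k.language := by
  have hsim : ∀ r' ∈ (TwoG k).rules, k.Derives [Symbol.nonterminal r'.input] r'.output := by
    intro r' hr'
    obtain ⟨r, hr, hst⟩ := mem_TwoG_cases hr'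
    rcases stepOuts_cases hst with ⟨rfl, _⟩ |
      ⟨a, b, B, rest, rest₂, r₂, hr₂, hout, hin₂, hout₂, rfl⟩
    · exact (Produces.single ⟨_, hr, ContextFreeRule.Rewrites.input_output⟩)
    · have step1 : k.Produces [Symbol.nonterminal r.input] r.output :=
        ⟨r, hr, by cases r; exact ContextFreeRule.Rewrites.input_output⟩
      have step2 : k.Produces ([Symbol.terminal a] ++ [Symbol.nonterminal r₂.input] ++ rest)
          ([Symbol.terminal a] ++ r₂.output ++ rest) :=
        ⟨r₂, hr₂, ContextFreeRule.rewrites_of_exists_parts r₂ [Symbol.terminal a] rest⟩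
      refine step1.trans_derives ?_
      rw [hout]
      have := step2.single
      rw [hin₂, hout₂] at this
      simpa using this
  -- completeness
  have compl : ∀ n : ℕ, ∀ (γ : List k.NT) (w : List T),
      DIn k n (γ.map Symbol.nonterminal) (w.map Symbol.terminal) →
      (TwoG k).Derives (γ.map Symbol.nonterminal) (w.map Symbol.terminal) := by
    intro n
    induction n using Nat.strong_induction_on with
    | _ n IHn =>
    suffices inner : ∀ (γ : List k.NT), ∀ m ≤ n, ∀ (w : List T),
        DIn k m (γ.map Symbol.nonterminal) (w.map Symbol.terminal) →
        (TwoG k).Derives (γ.map Symbol.nonterminal) (w.map Symbol.terminal) by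
      intro γ w h
      exact inner γ n le_rfl w h
    intro γ
    induction γ with
    | nil =>
      intro m _ w h
      have := h.nil
      have hw : w = [] := by cases w <;> simp_all
      subst hw
      exact Derives.refl _
    | cons A γ' ihγ =>
      intro m hm w h
      have h' : DIn k m ([Symbol.nonterminal A] ++ γ'.map Symbol.nonterminal)
          (w.map Symbol.terminal) := by simpa using h
      obtain ⟨m₁, m₂, v₁, v₂, hmn, hv, h₁, h₂⟩ := h'.append_cases
      obtain ⟨w₁, w₂, rfl, rfl, rfl⟩ := map_terminal_append_cases hv
      have hγ' := ihγ m₂ (by omega) w₂ h₂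
      have hA : (TwoG k).Derives [Symbol.nonterminal A] (w₁.map Symbol.terminal) := by
        rcases h₁.head_cases with ⟨_, habs⟩ | ⟨r, hr, hin, m₁', hm₁', hd⟩
        · exfalso; cases w₁ <;> simp at habs
        rcases hshape r hr with ⟨hi, ho⟩ | ⟨a, δ, ho⟩
        · rw [ho] at hd
          have := hd.nil
          have hw₁ : w₁ = [] := by cases w₁ <;> simp_all
          subst hw₁
          have : (TwoG k).Produces [Symbol.nonterminal A] [] := by
            refine produces_rule (mem_TwoG hr ?_)
            · have := mem_stepOuts_eps (k := k) ho
              rw [show (⟨A, ([] : List (Symbol T k.NT))⟩ : ContextFreeRule T k.NT) = r by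
                cases r; simp only at hin ho; rw [hin, ho]]
              exact this
          simpa using this.single
        · rw [ho] at hd
          have hd' : DIn k m₁' ([Symbol.terminal a] ++ δ.map Symbol.nonterminal)
              (w₁.map Symbol.terminal) := by simpa using hd
          obtain ⟨m₃, m₄, v₃, v₄, hmn₂, hv₂, h₃, h₄⟩ := hd'.append_cases
          obtain ⟨u₀, u₁, rfl, rfl, rfl⟩ := map_terminal_append_cases hv₂
          have hu₀ : u₀ = [a] := map_terminal_eq_single h₃.terminal
          subst hu₀
          cases δ with
          | nil =>
            have := h₄.nil
            have hu₁ : u₁ = [] := by cases u₁ <;> simp_all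
            subst hu₁
            simp only [List.map_nil] at ho
            have hrr : (⟨A, [Symbol.terminal a]⟩ : ContextFreeRule T k.NT) = r := by
              cases r; simp only at hin ho; rw [hin, ho]
            have : (TwoG k).Produces [Symbol.nonterminal A] [Symbol.terminal a] := by
              refine produces_rule (mem_TwoG hr ?_)
              rw [hrr]
              exact mem_stepOuts_single ho
            simpa using this.single
          | cons B δ₂ =>
            have h₄' : DIn k m₄ ([Symbol.nonterminal B] ++ δ₂.map Symbol.nonterminal)
                (u₁.map Symbol.terminal) := by simpa using h₄
            obtain ⟨k₁, k₂, v₅, v₆, hmn₃, hv₃, h₅, h₆⟩ := h₄'.append_cases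
            obtain ⟨wB, wrest, rfl, rfl, rfl⟩ := map_terminal_append_cases hv₃
            rcases h₅.head_cases with ⟨_, habs⟩ | ⟨r₂, hr₂, hin₂, k₁', hk₁', hd₂⟩
            · exfalso; cases wB <;> simp at habs
            have hBne : B ≠ k.initial := by
              intro hB
              exact hni r hr (by rw [ho, hB]; simp)
            rcases hshape r₂ hr₂ with ⟨hi₂, _⟩ | ⟨b, δ', ho₂⟩
            · exact absurd (hin₂ ▸ hi₂) hBne
            rw [ho₂] at hd₂
            have hd₂' : DIn k k₁' ([Symbol.terminal b] ++ δ'.map Symbol.nonterminal)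
                (wB.map Symbol.terminal) := by simpa using hd₂
            obtain ⟨k₃, k₄, v₇, v₈, hmn₄, hv₄, h₇, h₈⟩ := hd₂'.append_cases
            obtain ⟨ub0, uB, rfl, rfl, rfl⟩ := map_terminal_append_cases hv₄
            have hub0 : ub0 = [b] := map_terminal_eq_single h₇.terminal
            subst hub0
            -- composite rule
            have hrule : (⟨A, Symbol.terminal a :: Symbol.terminal b ::
                (δ'.map Symbol.nonterminal ++ δ₂.map Symbol.nonterminal)⟩ :
                ContextFreeRule T k.NT) ∈ (TwoG k).rules := by
              refine mem_TwoG hr ?_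
              have := mem_stepOuts_comp (k := k) (r := r) (r₂ := r₂)
                (by rw [ho]; rfl) hr₂ hin₂ ho₂
              rw [hin] at this
              exact this
            have hrec := IHn (k₄ + k₂) (by omega) (δ' ++ δ₂) (uB ++ wrest)
              (by rw [List.map_append, List.map_append]; exact h₈.append h₆)
            refine (produces_rule hrule).trans_derives ?_
            have := derives_append (Derives.refl
              ([Symbol.terminal a, Symbol.terminal b] : List (Symbol T (TwoG k).NT))) hrec
            simpa using this
      have := derives_append hA hγ'
      simpa using this
  ext w
  rw [mem_language_iff, mem_language_iff]
  constructor
  · intro h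
    exact derives_of_rules_derivable hsim h
  · intro h
    obtain ⟨n, hn⟩ := derives_iff_DIn.mp h
    have := compl n [k.initial] w (by simpa using hn)
    simpa using this

end TwoGNFPass

section Relabel

open scoped Classical

universe uM

def mapSym {N : Type uN} {M : Type uM} (f : N → M) : Symbol T N → Symbol T M
  | .terminal a => .terminal a
  | .nonterminal A => .nonterminal (f A)

lemma derives_map {k : ContextFreeGrammar T} {k' : ContextFreeGrammar T}
    (f : k.NT → k'.NT)
    (hrule : ∀ r ∈ k.rules,
      (⟨f r.input, r.output.map (mapSym f)⟩ : ContextFreeRule T k'.NT) ∈ k'.rules)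
    {u v : List (Symbol T k.NT)} (h : k.Derives u v) :
    k'.Derives (u.map (mapSym f)) (v.map (mapSym f)) := by
  induction h with
  | refl => rfl
  | tail _ hp ih =>
    obtain ⟨r, hr, hrw⟩ := hp
    obtain ⟨p, q, rfl, rfl⟩ := hrw.exists_parts
    refine ih.trans_produces ⟨_, hrule r hr, ?_⟩
    have := ContextFreeRule.rewrites_of_exists_parts
      (⟨f r.input, r.output.map (mapSym f)⟩ : ContextFreeRule T k'.NT)
      (p.map (mapSym f)) (q.map (mapSym f))
    simpa [mapSym] using this

noncomputable def relabel (k : ContextFreeGrammar T) : ContextFreeGrammar T :=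
  ⟨ULift.{0} ℕ, ⟨(occList k).idxOf k.initial⟩,
    k.rules.image (fun r =>
      ⟨⟨(occList k).idxOf r.input⟩,
        r.output.map (mapSym (fun A => (⟨(occList k).idxOf A⟩ : ULift.{0} ℕ)))⟩)⟩

lemma relabel_language (k : ContextFreeGrammar T) :
    (relabel k).language = k.language := by
  classical
  set φ : k.NT → ULift.{0} ℕ := fun A => ⟨(occList k).idxOf A⟩ with hφ
  set ψ : ULift.{0} ℕ → k.NT := fun i => (occList k).getD i.down k.initial with hψ
  have hψφ : ∀ A ∈ occList k, ψ (φ A) = A := by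
    intro A hA
    have hlt : (occList k).idxOf A < (occList k).length :=
      List.idxOf_lt_length_iff.mpr hA
    simp only [hψ, hφ, List.getD_eq_getElem _ _ hlt]
    exact List.getElem_idxOf hlt
  ext w
  rw [mem_language_iff, mem_language_iff]
  constructor
  · intro h
    have hrule : ∀ r ∈ (relabel k).rules,
        (⟨ψ r.input, r.output.map (mapSym ψ)⟩ : ContextFreeRule T k.NT) ∈ k.rules := by
      intro r hr
      letI : DecidableEq (relabel k).NT := fun a b => (inferInstance : DecidableEq (ULift.{0} ℕ)) a b
      have hr := Finset.mem_image.mp hr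
      obtain ⟨r₀, hr₀, rfl⟩ := hr
      have hin : ψ (φ r₀.input) = r₀.input := hψφ _ (input_mem_occList k hr₀)
      have hout : (r₀.output.map (mapSym φ)).map (mapSym ψ) = r₀.output := by
        rw [List.map_map]
        refine List.map_congr_left ?_ |>.trans (List.map_id _)
        intro s hs
        cases s with
        | terminal a => rfl
        | nonterminal B =>
          simp only [Function.comp_apply, mapSym, id]
          rw [hψφ B (output_nt_mem_occList k hr₀ hs)]
      show (⟨ψ (φ r₀.input), (r₀.output.map (mapSym φ)).map (mapSym ψ)⟩ :
          ContextFreeRule T k.NT) ∈ k.rules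
      rw [hin, hout]
      exact hr₀
    have := derives_map (k' := k) ψ hrule h
    have hinit : ψ ((relabel k).initial) = k.initial :=
      hψφ _ (initial_mem_occList k)
    simpa [mapSym, hinit, Function.comp_def] using this
  · intro h
    have hrule : ∀ r ∈ k.rules,
        (⟨φ r.input, r.output.map (mapSym φ)⟩ : ContextFreeRule T (relabel k).NT) ∈
          (relabel k).rules := by
      intro r hr
      letI : DecidableEq (relabel k).NT := fun a b => (inferInstance : DecidableEq (ULift.{0} ℕ)) a b
      refine Finset.mem_image.mpr ?_
      exact ⟨r, hr, rfl⟩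
    have := derives_map (k' := relabel k) φ hrule h
    simpa [mapSym, Function.comp_def, show (relabel k).initial = φ k.initial from rfl] using this

end Relabel

end TwoGNFProof

/-- For every context-free grammar `G`, there exists an equivalent context-free grammar
(generating the same language) in 2-Greibach normal form. -/
theorem exists_equivalent_twoGNF {T : Type} (G : ContextFreeGrammar T) :
    ∃ G' : ContextFreeGrammar T, G'.language = G.language ∧ G'.InTwoGNF := by
  classical
  have hsh : ∀ r ∈ (TwoGNFProof.HG (TwoGNFProof.relabel G)).rules,
      (r.input = (TwoGNFProof.HG (TwoGNFProof.relabel G)).initial ∧ r.output = []) ∨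
      ∃ (a : T) (δ : List (TwoGNFProof.HG (TwoGNFProof.relabel G)).NT),
        r.output = Symbol.terminal a :: δ.map Symbol.nonterminal := by
    intro r hr
    rcases TwoGNFProof.HG_shape r hr with h | ⟨a, δ, h, _⟩
    · exact .inl h
    · exact .inr ⟨a, δ, h⟩
  have hni := TwoGNFProof.HG_no_initial (g := TwoGNFProof.relabel G)
  refine ⟨TwoGNFProof.TwoG (TwoGNFProof.HG (TwoGNFProof.relabel G)), ?_,
    TwoGNFProof.TwoG_shape hsh hni⟩
  rw [TwoGNFProof.TwoG_language hsh hni, TwoGNFProof.HG_language,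
    TwoGNFProof.relabel_language]
end

section
/- Let G be a context-free grammar in Greibach normal form. Let G' be the grammar obtained from G by replacing every rule of the form A → a A₁ A₂ ⋯ A_m with m ≥ 1 by the set of all rules A → a b B₁ ⋯ B_ℓ A₂ ⋯ A_m such that A₁ → b B₁ ⋯ B_ℓ is a rule of G (discarding the original rule), while keeping all rules of the forms S → ε and A → a unchanged. Then L(G') = L(G), and G' is in 2-Greibach normal form. -/
/-- A context-free grammar is in *Greibach normal form* if its start variable does not
appear on the right-hand side of any rule, and every rule has one of the forms
`S → ε` or `A → a B₁⋯B_p` with `p ≥ 0`, where `a` is a terminal and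
`A, B₁, …, B_p` are variables. -/
def ContextFreeGrammar.InGNF {T : Type} (G : ContextFreeGrammar T) : Prop :=
  (∀ r ∈ G.rules, Symbol.nonterminal G.initial ∉ r.output) ∧
  ∀ r ∈ G.rules,
    (r.input = G.initial ∧ r.output = []) ∨
    (∃ (a : T) (Bs : List G.NT),
      r.output = Symbol.terminal a :: Bs.map Symbol.nonterminal)

namespace GnfAux

open ContextFreeGrammar

variable {T : Type} {g : ContextFreeGrammar T}

inductive DerivesIn (g : ContextFreeGrammar T) :
    List (Symbol T g.NT) → List (Symbol T g.NT) → ℕ → Prop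
  | refl (u : List (Symbol T g.NT)) : DerivesIn g u u 0
  | head {u v w : List (Symbol T g.NT)} {n : ℕ} :
      g.Produces u v → DerivesIn g v w n → DerivesIn g u w (n + 1)

lemma DerivesIn.derives {u v : List (Symbol T g.NT)} {n : ℕ}
    (h : DerivesIn g u v n) : g.Derives u v := by
  induction h with
  | refl => exact Derives.refl _
  | head hp _ ih => exact hp.trans_derives ih

lemma derives_iff_derivesIn {u v : List (Symbol T g.NT)} :
    g.Derives u v ↔ ∃ n, DerivesIn g u v n := by
  constructor
  · intro h
    induction h using Relation.ReflTransGen.head_induction_on with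
    | refl => exact ⟨0, DerivesIn.refl _⟩
    | head hp _ ih => exact ⟨ih.choose + 1, DerivesIn.head hp ih.choose_spec⟩
  · rintro ⟨n, h⟩; exact h.derives

lemma DerivesIn.trans {u v w : List (Symbol T g.NT)} {m n : ℕ}
    (h₁ : DerivesIn g u v m) (h₂ : DerivesIn g v w n) :
    DerivesIn g u w (m + n) := by
  induction h₁ with
  | refl => simpa using h₂
  | head hp _ ih => exact (Nat.succ_add _ n) ▸ DerivesIn.head hp (ih h₂)

lemma DerivesIn.append_left {u v : List (Symbol T g.NT)} {n : ℕ}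
    (h : DerivesIn g u v n) (p : List (Symbol T g.NT)) :
    DerivesIn g (p ++ u) (p ++ v) n := by
  induction h with
  | refl => exact DerivesIn.refl _
  | head hp _ ih => exact DerivesIn.head (hp.append_left p) ih

lemma DerivesIn.append_right {u v : List (Symbol T g.NT)} {n : ℕ}
    (h : DerivesIn g u v n) (p : List (Symbol T g.NT)) :
    DerivesIn g (u ++ p) (v ++ p) n := by
  induction h with
  | refl => exact DerivesIn.refl _
  | head hp _ ih => exact DerivesIn.head (hp.append_right p) ih

lemma DerivesIn.append {u v x y : List (Symbol T g.NT)} {m n : ℕ}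
    (h₁ : DerivesIn g u x m) (h₂ : DerivesIn g v y n) :
    DerivesIn g (u ++ v) (x ++ y) (m + n) :=
  (h₁.append_right v).trans (h₂.append_left x)

/-- A derivation from a concatenation splits. -/
lemma DerivesIn.split {u w : List (Symbol T g.NT)} {n : ℕ}
    (h : DerivesIn g u w n) :
    ∀ p q : List (Symbol T g.NT), u = p ++ q →
    ∃ (w₁ w₂ : List (Symbol T g.NT)) (n₁ n₂ : ℕ),
      w = w₁ ++ w₂ ∧ n₁ + n₂ = n ∧ DerivesIn g p w₁ n₁ ∧ DerivesIn g q w₂ n₂ := by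
  induction h with
  | refl u => exact fun p q hpq => ⟨p, q, 0, 0, hpq, rfl, DerivesIn.refl _, DerivesIn.refl _⟩
  | @head u v w n hp hd ih =>
    rintro p q rfl
    obtain ⟨r, hr, hrw⟩ := hp
    obtain ⟨x, y, hxy, rfl⟩ := hrw.exists_parts
    rw [List.append_assoc] at hxy
    rcases List.append_eq_append_iff.mp hxy.symm with ⟨a', ha1, ha2⟩ | ⟨c', hc1, hc2⟩
    · cases a' with
      | nil =>
        simp only [List.append_nil] at ha1
        simp only [List.nil_append] at ha2
        obtain ⟨w₁, w₂, n₁, n₂, hw, hn, h1, h2⟩ :=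
          ih x (r.output ++ y) (by simp)
        subst ha1
        refine ⟨w₁, w₂, n₁, n₂ + 1, hw, by omega, h1, DerivesIn.head ⟨r, hr, ?_⟩ h2⟩
        rw [← ha2]
        simpa using ContextFreeRule.rewrites_of_exists_parts r [] y
      | cons s a'' =>
        obtain ⟨hs, hy⟩ : s = Symbol.nonterminal r.input ∧ y = a'' ++ q := by
          simp only [List.cons_append, List.singleton_append, List.nil_append,
            List.cons.injEq] at ha2
          exact ⟨ha2.1.symm, ha2.2⟩
        subst hs hy ha1
        obtain ⟨w₁, w₂, n₁, n₂, hw, hn, h1, h2⟩ :=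
          ih (x ++ r.output ++ a'') q (by simp)
        refine ⟨w₁, w₂, n₁ + 1, n₂, hw, by omega, DerivesIn.head ⟨r, hr, ?_⟩ h1, h2⟩
        simpa using ContextFreeRule.rewrites_of_exists_parts r x a''
    · subst hc1
      obtain ⟨w₁, w₂, n₁, n₂, hw, hn, h1, h2⟩ :=
        ih p (c' ++ r.output ++ y) (by simp)
      refine ⟨w₁, w₂, n₁, n₂ + 1, hw, by omega, h1, DerivesIn.head ⟨r, hr, ?_⟩ h2⟩
      rw [hc2]
      simpa using ContextFreeRule.rewrites_of_exists_parts r c' y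

section Main

variable {T N : Type} {S : N} {R R' : Finset (ContextFreeRule T N)}

variable (hR' : ∀ r' : ContextFreeRule T N,
      r' ∈ R' ↔
        (r' ∈ R ∧ (r'.output = [] ∨ ∃ a : T, r'.output = [Symbol.terminal a])) ∨
        (∃ (A A₁ : N) (a b : T) (rest Bs : List N),
          (⟨A, Symbol.terminal a :: Symbol.nonterminal A₁ :: rest.map Symbol.nonterminal⟩ :
              ContextFreeRule T N) ∈ R ∧
          (⟨A₁, Symbol.terminal b :: Bs.map Symbol.nonterminal⟩ :
              ContextFreeRule T N) ∈ R ∧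
          r' = ⟨A, Symbol.terminal a :: Symbol.terminal b ::
              (Bs ++ rest).map Symbol.nonterminal⟩))

include hR'

lemma prime_to_base {u v : List (Symbol T N)}
    (h : (⟨N, S, R'⟩ : ContextFreeGrammar T).Derives u v) :
    (⟨N, S, R⟩ : ContextFreeGrammar T).Derives u v := by
  induction h using Relation.ReflTransGen.head_induction_on with
  | refl => exact Derives.refl _
  | head hp _ ih =>
    obtain ⟨r', hr', hrw⟩ := hp
    rcases (hR' r').mp hr' with ⟨hrR, _⟩ | ⟨A, A₁, a, b, rest, Bs, h1, h2, rfl⟩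
    · exact Produces.trans_derives ⟨r', hrR, hrw⟩ ih
    · obtain ⟨x, y, rfl, rfl⟩ := hrw.exists_parts
      have step1 : (⟨N, S, R⟩ : ContextFreeGrammar T).Produces
          (x ++ [Symbol.nonterminal A] ++ y)
          (x ++ (Symbol.terminal a :: Symbol.nonterminal A₁ ::
            rest.map Symbol.nonterminal) ++ y) :=
        ⟨_, h1, ContextFreeRule.rewrites_of_exists_parts
          ⟨A, Symbol.terminal a :: Symbol.nonterminal A₁ :: rest.map Symbol.nonterminal⟩ x y⟩
      have step2 : (⟨N, S, R⟩ : ContextFreeGrammar T).Produces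
          (x ++ (Symbol.terminal a :: Symbol.nonterminal A₁ ::
            rest.map Symbol.nonterminal) ++ y)
          (x ++ (Symbol.terminal a :: Symbol.terminal b ::
            (Bs ++ rest).map Symbol.nonterminal) ++ y) := by
        refine ⟨⟨A₁, Symbol.terminal b :: Bs.map Symbol.nonterminal⟩, h2, ?_⟩
        have := ContextFreeRule.rewrites_of_exists_parts
          (⟨A₁, Symbol.terminal b :: Bs.map Symbol.nonterminal⟩ : ContextFreeRule T N)
          (x ++ [Symbol.terminal a]) (rest.map Symbol.nonterminal ++ y)
        simpa using this
      exact step1.trans_derives (step2.trans_derives ih)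

lemma base_to_prime (hGNF : (⟨N, S, R⟩ : ContextFreeGrammar T).InGNF) :
    ∀ n (u : List (Symbol T N)) (w : List T),
    DerivesIn (⟨N, S, R⟩ : ContextFreeGrammar T) u (w.map Symbol.terminal) n →
    (⟨N, S, R'⟩ : ContextFreeGrammar T).Derives u (w.map Symbol.terminal) := by
  intro n
  induction n using Nat.strong_induction_on with
  | _ n ih =>
  intro u w h
  obtain ⟨W, hW⟩ : ∃ W, W = w.map Symbol.terminal := ⟨_, rfl⟩
  rw [← hW] at h ⊢
  match h with
  | .refl _ => exact Derives.refl _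
  | @DerivesIn.head _ _ _ v _ m hp hd =>
    subst hW
    obtain ⟨r, hr, hrw⟩ := hp
    obtain ⟨x, y, rfl, rfl⟩ := hrw.exists_parts
    rcases hGNF.2 r hr with ⟨_, hout⟩ | ⟨a, Bs, hout⟩
    · have hrR' : r ∈ R' := (hR' r).mpr (Or.inl ⟨hr, Or.inl hout⟩)
      exact Produces.trans_derives
        ⟨r, hrR', ContextFreeRule.rewrites_of_exists_parts r x y⟩
        (ih m (by omega) _ w hd)
    · cases Bs with
      | nil =>
        have hrR' : r ∈ R' := (hR' r).mpr (Or.inl ⟨hr, Or.inr ⟨a, by simpa using hout⟩⟩)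
        exact Produces.trans_derives
          ⟨r, hrR', ContextFreeRule.rewrites_of_exists_parts r x y⟩
          (ih m (by omega) _ w hd)
      | cons A₁ rest =>
        simp only [List.map_cons] at hout
        -- split the derivation
        obtain ⟨w₁, w₂', n₁, n₂', hw, hn, h1, h2'⟩ :=
          hd.split (x ++ [Symbol.terminal a])
            ([Symbol.nonterminal A₁] ++ (rest.map Symbol.nonterminal ++ y))
            (by simp [hout])
        obtain ⟨w₂, w₃, n₂, n₃, hw2, hn2, h2, h3⟩ :=
          h2'.split [Symbol.nonterminal A₁] (rest.map Symbol.nonterminal ++ y) rfl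
        cases h2 with
        | refl =>
          exfalso
          have hmem : Symbol.nonterminal A₁ ∈ w.map (Symbol.terminal (N := N)) := by
            rw [hw, hw2]; simp
          simp only [List.mem_map] at hmem
          obtain ⟨t, _, ht⟩ := hmem
          exact nomatch ht
        | @head _ v₂ _ k hp2 hd2 =>
          obtain ⟨r1, hr1, hrw1⟩ := hp2
          obtain ⟨p1, q1, he, rfl⟩ := hrw1.exists_parts
          have hpq : p1 = [] ∧ q1 = [] ∧ r1.input = A₁ := by
            cases p1 with
            | nil =>
              simp only [List.nil_append, List.singleton_append, List.cons.injEq] at he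
              exact ⟨rfl, he.2.symm, (Symbol.nonterminal.injEq _ _ ▸ he.1).symm⟩
            | cons s p1' =>
              exfalso
              have := congrArg List.length he
              simp at this
          obtain ⟨rfl, rfl, hA₁⟩ := hpq
          simp only [List.nil_append, List.append_nil] at hd2 ⊢
          -- r1 is not an epsilon rule
          have hA₁S : A₁ ≠ S := by
            intro hcon
            exact hGNF.1 r hr (by rw [hout, ← hcon]; simp)
          rcases hGNF.2 r1 hr1 with ⟨hin1, _⟩ | ⟨b, Cs, hout1⟩
          · exact absurd (hA₁ ▸ hin1) hA₁S
          · -- the combined rule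
            set r' : ContextFreeRule T N :=
              ⟨r.input, Symbol.terminal a :: Symbol.terminal b ::
                (Cs ++ rest).map Symbol.nonterminal⟩ with hr'def
            have hr'R' : r' ∈ R' := by
              refine (hR' r').mpr (Or.inr ⟨r.input, A₁, a, b, rest, Cs, ?_, ?_, rfl⟩)
              · have : (⟨r.input, Symbol.terminal a :: Symbol.nonterminal A₁ ::
                    rest.map Symbol.nonterminal⟩ : ContextFreeRule T N) = r := by
                  rw [← hout]
                rwa [this]
              · have : (⟨A₁, Symbol.terminal b :: Cs.map Symbol.nonterminal⟩ :
                    ContextFreeRule T N) = r1 := by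
                  rw [← hout1, ← hA₁]
                rwa [this]
            -- remaining derivation in the base grammar
            have hd2' : DerivesIn (⟨N, S, R⟩ : ContextFreeGrammar T)
                (Symbol.terminal b :: Cs.map Symbol.nonterminal) w₂ k := hout1 ▸ hd2
            have D : DerivesIn (⟨N, S, R⟩ : ContextFreeGrammar T)
                ((x ++ [Symbol.terminal a]) ++
                  ((Symbol.terminal b :: Cs.map Symbol.nonterminal) ++
                    (rest.map Symbol.nonterminal ++ y)))
                (w₁ ++ (w₂ ++ w₃)) (n₁ + (k + n₃)) :=
              h1.append (hd2'.append h3)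
            have hsrc : (x ++ [Symbol.terminal a]) ++
                  ((Symbol.terminal b :: Cs.map Symbol.nonterminal) ++
                    (rest.map Symbol.nonterminal ++ y)) =
                x ++ r'.output ++ y := by
              simp [hr'def]
            have htgt : w₁ ++ (w₂ ++ w₃) = w.map Symbol.terminal := by
              rw [hw, hw2]
            rw [hsrc, htgt] at D
            refine Produces.trans_derives
              ⟨r', hr'R', ContextFreeRule.rewrites_of_exists_parts r' x y⟩ ?_
            exact ih (n₁ + (k + n₃)) (by omega) _ w D

end Main

end GnfAux


/-- Let `G = ⟨N, S, R⟩` be a grammar in Greibach normal form, and let `G' = ⟨N, S, R'⟩` be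
obtained from `G` by replacing every rule `A → a A₁ A₂ ⋯ A_m` (with `m ≥ 1`) by all rules
`A → a b B₁ ⋯ B_ℓ A₂ ⋯ A_m` such that `A₁ → b B₁ ⋯ B_ℓ` is a rule of `G` (discarding the
original rule), while keeping all rules of the forms `S → ε` and `A → a` unchanged.
Then `L(G') = L(G)` and `G'` is in 2-Greibach normal form. -/
theorem gnf_to_twoGNF {T N : Type} (S : N) (R R' : Finset (ContextFreeRule T N))
    (hGNF : (⟨N, S, R⟩ : ContextFreeGrammar T).InGNF)
    (hR' : ∀ r' : ContextFreeRule T N,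
      r' ∈ R' ↔
        (r' ∈ R ∧ (r'.output = [] ∨ ∃ a : T, r'.output = [Symbol.terminal a])) ∨
        (∃ (A A₁ : N) (a b : T) (rest Bs : List N),
          (⟨A, Symbol.terminal a :: Symbol.nonterminal A₁ :: rest.map Symbol.nonterminal⟩ :
              ContextFreeRule T N) ∈ R ∧
          (⟨A₁, Symbol.terminal b :: Bs.map Symbol.nonterminal⟩ :
              ContextFreeRule T N) ∈ R ∧
          r' = ⟨A, Symbol.terminal a :: Symbol.terminal b ::
              (Bs ++ rest).map Symbol.nonterminal⟩)) :
    (⟨N, S, R'⟩ : ContextFreeGrammar T).language = (⟨N, S, R⟩ : ContextFreeGrammar T).language ∧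
      (⟨N, S, R'⟩ : ContextFreeGrammar T).InTwoGNF := by
  constructor
  · ext w
    simp only [ContextFreeGrammar.mem_language_iff]
    constructor
    · exact fun h => GnfAux.prime_to_base hR' h
    · intro h
      obtain ⟨n, hn⟩ := GnfAux.derives_iff_derivesIn.mp h
      exact GnfAux.base_to_prime hR' hGNF n _ w hn
  · constructor
    · intro r' hr'
      rcases (hR' r').mp hr' with ⟨hrR, _⟩ | ⟨A, A₁, a, b, rest, Bs, h1, h2, rfl⟩
      · exact hGNF.1 r' hrR
      · intro hmem
        simp only [List.mem_cons, List.mem_map] at hmem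
        rcases hmem with h | h | ⟨B, hB, hBe⟩
        · exact nomatch h
        · exact nomatch h
        · have hBS : B = S := by
            cases hBe; rfl
          subst hBS
          rcases List.mem_append.mp hB with hBs | hrest
          · exact hGNF.1 _ h2
              (List.mem_cons_of_mem _ (List.mem_map_of_mem hBs))
          · exact hGNF.1 _ h1
              (List.mem_cons_of_mem _ (List.mem_cons_of_mem _ (List.mem_map_of_mem hrest)))
    · intro r' hr'
      rcases (hR' r').mp hr' with ⟨hrR, hout⟩ | ⟨A, A₁, a, b, rest, Bs, h1, h2, rfl⟩
      · rcases hout with hout | ⟨a, hout⟩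
        · rcases hGNF.2 r' hrR with ⟨hin, _⟩ | ⟨a, Bs, hout2⟩
          · exact Or.inl ⟨hin, hout⟩
          · rw [hout] at hout2; exact absurd hout2 (by simp)
        · exact Or.inr (Or.inl ⟨a, hout⟩)
      · exact Or.inr (Or.inr ⟨a, b, Bs ++ rest, rfl⟩)
end

section
/- For every context-free language L over an alphabet Σ, there exists a restricted PDA whose language is exactly L; in particular, every context-free language is recognized by a real-time nondeterministic pushdown automaton, one in which every transition scans exactly one input symbol. -/
/-- A *restricted PDA*: a bottom-marked nondeterministic pushdown automaton each of whose
transitions scans exactly one input symbol and either pushes a single symbol on top of the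
current top symbol (`q, a, x → r, xy`), replaces the top symbol (`q, a, x → r, y`), or pops
the top symbol (`q, a, x → r, ε`).  Stacks are lists whose head is the top of the stack. -/
structure RestrictedPDA (Q T S : Type) where
  /-- The start state. -/
  start : Q
  /-- The designated bottom symbol `⊥`. -/
  bot : S
  /-- `pushTrans q a x r y` is the transition `q, a, x → r, xy`. -/
  pushTrans : Q → T → S → Q → S → Prop
  /-- `replTrans q a x r y` is the transition `q, a, x → r, y`. -/
  replTrans : Q → T → S → Q → S → Prop
  /-- `popTrans q a x r` is the transition `q, a, x → r, ε`. -/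
  popTrans : Q → T → S → Q → Prop
  /-- The set of accept states. -/
  accept : Set Q

/-- A single step of a restricted PDA, scanning one input symbol. -/
inductive RestrictedPDA.Step {Q T S : Type} (M : RestrictedPDA Q T S) :
    Q × List S → T → Q × List S → Prop
  | push {q : Q} {a : T} {x : S} {r : Q} {y : S} {β : List S} :
      M.pushTrans q a x r y → RestrictedPDA.Step M (q, x :: β) a (r, y :: x :: β)
  | repl {q : Q} {a : T} {x : S} {r : Q} {y : S} {β : List S} :
      M.replTrans q a x r y → RestrictedPDA.Step M (q, x :: β) a (r, y :: β)
  | pop {q : Q} {a : T} {x : S} {r : Q} {β : List S} :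
      M.popTrans q a x r → RestrictedPDA.Step M (q, x :: β) a (r, β)

/-- `M.Scans c w c'` means that `M` can go from configuration `c` to configuration `c'` by a
run scanning exactly the string `w` (one input symbol per step). -/
inductive RestrictedPDA.Scans {Q T S : Type} (M : RestrictedPDA Q T S) :
    Q × List S → List T → Q × List S → Prop
  | refl (c : Q × List S) : RestrictedPDA.Scans M c [] c
  | step {c c' c'' : Q × List S} {a : T} {w : List T} :
      M.Step c a c' → RestrictedPDA.Scans M c' w c'' → RestrictedPDA.Scans M c (a :: w) c''

/-- The language of a restricted PDA: it accepts `w` iff some run starting from the start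
state with stack containing only `⊥` and scanning `w` ends in an accept state with `⊥` as
the top stack symbol. -/
def RestrictedPDA.language {Q T S : Type} (M : RestrictedPDA Q T S) : Language T :=
  {w | ∃ r ∈ M.accept, ∃ β : List S, M.Scans (M.start, [M.bot]) w (r, M.bot :: β)}


namespace RPDAProof
open ContextFreeGrammar ContextFreeRule Symbol

noncomputable section

variable {T : Type}

lemma rewrites_append_split {N : Type} {r : ContextFreeRule T N} :
    ∀ {x y v : List (Symbol T N)}, r.Rewrites (x ++ y) v →
      (∃ x', r.Rewrites x x' ∧ v = x' ++ y) ∨ (∃ y', r.Rewrites y y' ∧ v = x ++ y') := by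
  intro x
  induction x with
  | nil => intro y v h; right; exact ⟨v, h, rfl⟩
  | cons s x ih =>
    intro y v h
    cases h with
    | head s' =>
      left
      exact ⟨r.output ++ x, ContextFreeRule.Rewrites.head x, by simp⟩
    | cons _ h' =>
      rcases ih h' with ⟨x', hx, rfl⟩ | ⟨y', hy, rfl⟩
      · left; exact ⟨s :: x', ContextFreeRule.Rewrites.cons s hx, rfl⟩
      · right; exact ⟨y', hy, rfl⟩

variable {g : ContextFreeGrammar.{0} T}

lemma produces_append_split {x y v : List (Symbol T g.NT)} (h : g.Produces (x ++ y) v) :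
    (∃ x', g.Produces x x' ∧ v = x' ++ y) ∨ (∃ y', g.Produces y y' ∧ v = x ++ y') := by
  rcases h with ⟨r, hr, hrw⟩
  rcases rewrites_append_split hrw with ⟨x', hx, rfl⟩ | ⟨y', hy, rfl⟩
  · exact Or.inl ⟨x', ⟨r, hr, hx⟩, rfl⟩
  · exact Or.inr ⟨y', ⟨r, hr, hy⟩, rfl⟩

/-- length-indexed derivation -/
inductive DerivesIn (g : ContextFreeGrammar.{0} T) :
    List (Symbol T g.NT) → List (Symbol T g.NT) → ℕ → Prop
  | refl (u) : DerivesIn g u u 0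
  | head {u v w n} : g.Produces u v → DerivesIn g v w n → DerivesIn g u w (n + 1)

lemma DerivesIn.toDerives {u w n} (h : DerivesIn g u w n) : g.Derives u w := by
  induction h with
  | refl => exact Relation.ReflTransGen.refl
  | head hp _ ih => exact hp.trans_derives ih

lemma derives_iff_derivesIn {u w : List (Symbol T g.NT)} :
    g.Derives u w ↔ ∃ n, DerivesIn g u w n := by
  constructor
  · intro h
    induction h using Relation.ReflTransGen.head_induction_on with
    | refl => exact ⟨0, DerivesIn.refl w⟩
    | head hp _ ih => exact ⟨ih.choose + 1, DerivesIn.head hp ih.choose_spec⟩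
  · rintro ⟨n, h⟩; exact h.toDerives

lemma derivesIn_append_split {u w : List (Symbol T g.NT)} {n : ℕ}
    (h : DerivesIn g u w n) :
    ∀ x y, u = x ++ y → ∃ w₁ w₂ n₁ n₂, w = w₁ ++ w₂ ∧
      DerivesIn g x w₁ n₁ ∧ DerivesIn g y w₂ n₂ ∧ n₁ + n₂ = n := by
  induction h with
  | refl u =>
    intro x y hxy; subst hxy
    exact ⟨x, y, 0, 0, rfl, DerivesIn.refl x, DerivesIn.refl y, rfl⟩
  | head hp _ ih =>
    rintro x y rfl
    rcases produces_append_split hp with ⟨x', hx, rfl⟩ | ⟨y', hy, rfl⟩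
    · rcases ih x' y rfl with ⟨w₁, w₂, n₁, n₂, rfl, h1, h2, rfl⟩
      exact ⟨w₁, w₂, n₁ + 1, n₂, rfl, DerivesIn.head hx h1, h2, by omega⟩
    · rcases ih x y' rfl with ⟨w₁, w₂, n₁, n₂, rfl, h1, h2, rfl⟩
      exact ⟨w₁, w₂, n₁, n₂ + 1, rfl, h1, DerivesIn.head hy h2, by omega⟩

lemma derives_append_split {x y w : List (Symbol T g.NT)} (h : g.Derives (x ++ y) w) :
    ∃ w₁ w₂, w = w₁ ++ w₂ ∧ g.Derives x w₁ ∧ g.Derives y w₂ := by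
  rw [derives_iff_derivesIn] at h
  rcases h with ⟨n, h⟩
  rcases derivesIn_append_split h x y rfl with ⟨w₁, w₂, n₁, n₂, rfl, h1, h2, -⟩
  exact ⟨w₁, w₂, rfl, h1.toDerives, h2.toDerives⟩

lemma derives_nil {w : List (Symbol T g.NT)} (h : g.Derives [] w) : w = [] := by
  rcases h.cases_head with rfl | ⟨v, ⟨r, _, hrw⟩, -⟩
  · rfl
  · cases hrw

lemma derives_single_terminal {a : T} {w : List (Symbol T g.NT)}
    (h : g.Derives [Symbol.terminal a] w) : w = [Symbol.terminal a] := by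
  rcases h.cases_head with rfl | ⟨v, ⟨r, _, hrw⟩, h'⟩
  · rfl
  · exfalso
    cases hrw with
    | cons _ h'' => cases h''

lemma derives_append_both {x x' y y' : List (Symbol T g.NT)}
    (h1 : g.Derives x x') (h2 : g.Derives y y') : g.Derives (x ++ y) (x' ++ y') :=
  (h1.append_right y).trans (h2.append_left x')

lemma produces_single_nt {C : g.NT} {v : List (Symbol T g.NT)}
    (h : g.Produces [Symbol.nonterminal C] v) :
    ∃ r ∈ g.rules, r.input = C ∧ v = r.output := by
  rcases h with ⟨r, hr, hrw⟩
  rcases hrw.exists_parts with ⟨p, q, hpq, rfl⟩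
  have hp : p = [] := by
    cases p with
    | nil => rfl
    | cons s p' =>
      exfalso
      have := congrArg List.length hpq
      simp at this
  subst hp
  simp at hpq
  exact ⟨r, hr, hpq.1.symm, by simp [hpq.2]⟩

/-- `lam` derives the empty string. -/
def NullStr (g : ContextFreeGrammar.{0} T) (lam : List (Symbol T g.NT)) : Prop :=
  g.Derives lam []

/-- `mu` derives the terminal word `v`. -/
def DerStr (g : ContextFreeGrammar.{0} T) (mu : List (Symbol T g.NT)) (v : List T) : Prop :=
  g.Derives mu (v.map Symbol.terminal)

lemma derStr_split {x y : List (Symbol T g.NT)} {z : List T}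
    (h : DerStr g (x ++ y) z) :
    ∃ z₁ z₂, z = z₁ ++ z₂ ∧ DerStr g x z₁ ∧ DerStr g y z₂ := by
  rcases derives_append_split h with ⟨w₁, w₂, hw, h1, h2⟩
  rcases List.map_eq_append_iff.mp hw with ⟨z₁, z₂, rfl, rfl, rfl⟩
  exact ⟨z₁, z₂, rfl, h1, h2⟩

lemma derStr_nil_iff {z : List T} (h : DerStr g [] z) : z = [] := by
  have := derives_nil h
  simpa using this


lemma produces_head {C : g.NT} {out s : List (Symbol T g.NT)}
    (hr : (⟨C, out⟩ : ContextFreeRule T g.NT) ∈ g.rules) :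
    g.Produces (Symbol.nonterminal C :: s) (out ++ s) :=
  ⟨_, hr, ContextFreeRule.Rewrites.head s⟩

/-- "null-spine completion": `NSC g C X w` holds iff there is a chain
`C = Z₀, Z₁, ..., Z_k = X` (k ≥ 1) of nonterminals where each `Zᵢ` has a rule
`Zᵢ → λᵢ Z_{i+1} μᵢ` with `λᵢ` nullable, and `w` is a concatenation
`D(μ_{k-1}) ⋯ D(μ₀)` of terminal words derived from the `μᵢ`. -/
inductive NSC (g : ContextFreeGrammar.{0} T) : g.NT → g.NT → List T → Prop
  | base {C X : g.NT} {lam mu : List (Symbol T g.NT)} {w : List T} :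
      (⟨C, lam ++ Symbol.nonterminal X :: mu⟩ : ContextFreeRule T g.NT) ∈ g.rules →
      NullStr g lam → DerStr g mu w → NSC g C X w
  | step {C Z X : g.NT} {lam mu : List (Symbol T g.NT)} {v w : List T} :
      NSC g C Z w →
      (⟨Z, lam ++ Symbol.nonterminal X :: mu⟩ : ContextFreeRule T g.NT) ∈ g.rules →
      NullStr g lam → DerStr g mu v → NSC g C X (v ++ w)

lemma NSC.sound {C X : g.NT} {w : List T} (h : NSC g C X w) :
    g.Derives [Symbol.nonterminal C] (Symbol.nonterminal X :: w.map Symbol.terminal) := by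
  induction h with
  | base hr hlam hmu =>
    rename_i X' lam mu w'
    have h1 := (produces_head (s := []) hr).trans_derives
      (show g.Derives ((lam ++ Symbol.nonterminal X' :: mu) ++ [])
          (([] ++ Symbol.nonterminal X' :: w'.map Symbol.terminal) ++ []) from
        Derives.append_right
          (derives_append_both hlam (hmu.append_left [Symbol.nonterminal X'])) [])
    simpa using h1
  | step hprev hr hlam hmu ih =>
    rename_i Z X' lam mu v w'
    refine ih.trans ?_
    have h1 := (produces_head (s := w'.map Symbol.terminal) hr).trans_derives
      (show g.Derives ((lam ++ Symbol.nonterminal X' :: mu) ++ w'.map Symbol.terminal)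
          (([] ++ Symbol.nonterminal X' :: v.map Symbol.terminal) ++ w'.map Symbol.terminal) from
        Derives.append_right
          (derives_append_both hlam (hmu.append_left [Symbol.nonterminal X'])) _)
    simpa using h1

/-- extend an NSC chain at the bottom -/
lemma NSC.bottom {C D X : g.NT} {lam mu : List (Symbol T g.NT)} {u z : List T}
    (h : NSC g D X u)
    (hr : (⟨C, lam ++ Symbol.nonterminal D :: mu⟩ : ContextFreeRule T g.NT) ∈ g.rules)
    (hlam : NullStr g lam) (hmu : DerStr g mu z) :
    NSC g C X (u ++ z) := by
  induction h with
  | base hr2 hlam2 hmu2 =>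
    exact NSC.step (NSC.base hr hlam hmu) hr2 hlam2 hmu2
  | step _ hr2 hlam2 hmu2 ih =>
    have := NSC.step ih hr2 hlam2 hmu2
    simpa [List.append_assoc] using this

/-- L0: decomposition of a derivation of a nonempty terminal word from a string -/
lemma decompStr : ∀ {eta : List (Symbol T g.NT)} {a : T} {z : List T} {n : ℕ},
    DerivesIn g eta ((a :: z).map Symbol.terminal) n →
    ∃ lam σ mu z₁ z₂, eta = lam ++ σ :: mu ∧ NullStr g lam ∧ z = z₁ ++ z₂ ∧ DerStr g mu z₂ ∧
      ((σ = Symbol.terminal a ∧ z₁ = []) ∨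
        ∃ D, σ = Symbol.nonterminal D ∧
          ∃ n₁ ≤ n, DerivesIn g [Symbol.nonterminal D] ((a :: z₁).map Symbol.terminal) n₁) := by
  intro eta
  induction eta with
  | nil =>
    intro a z n h
    exfalso
    have := derives_nil h.toDerives
    simp at this
  | cons σ eta ih =>
    intro a z n h
    rcases derivesIn_append_split h [σ] eta rfl with ⟨w₁, w₂, n₁, n₂, hw, h1, h2, hn⟩
    rcases List.map_eq_append_iff.mp hw with ⟨t₁, t₂, ht, rfl, rfl⟩
    cases t₁ with
    | nil =>
      simp at ht
      rcases ht with ⟨rfl, rfl⟩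
      have hnull : g.Derives [σ] [] := by simpa using h1.toDerives
      rcases ih h2 with ⟨lam, σ', mu, z₁, z₂, rfl, hlam, hz, hmu, hcase⟩
      refine ⟨σ :: lam, σ', mu, z₁, z₂, rfl, ?_, hz, hmu, ?_⟩
      · have := derives_append_both hnull hlam
        simpa [NullStr] using this
      · rcases hcase with h | ⟨D, hD, n₁', hle, hder⟩
        · exact Or.inl h
        · exact Or.inr ⟨D, hD, n₁', le_trans hle (by omega), hder⟩
    | cons a' t₁ =>
      simp at ht
      rcases ht with ⟨⟨rfl, rfl⟩, rfl⟩
      cases σ with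
      | terminal b =>
        have hsing := derives_single_terminal h1.toDerives
        simp at hsing
        rcases hsing with ⟨rfl, rfl⟩
        exact ⟨[], Symbol.terminal a, eta, [], t₂, rfl, Relation.ReflTransGen.refl, rfl,
          h2.toDerives, Or.inl ⟨rfl, rfl⟩⟩
      | nonterminal D =>
        exact ⟨[], Symbol.nonterminal D, eta, t₁, t₂, rfl, Relation.ReflTransGen.refl, rfl,
          h2.toDerives, Or.inr ⟨D, rfl, n₁, by omega, h1⟩⟩

/-- L1: head-terminal decomposition of a derivation from a single nonterminal. -/
lemma coreDecomp : ∀ n : ℕ, ∀ {C : g.NT} {a : T} {z : List T},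
    DerivesIn g [Symbol.nonterminal C] ((a :: z).map Symbol.terminal) n →
    (∃ lam mu, (⟨C, lam ++ Symbol.terminal a :: mu⟩ : ContextFreeRule T g.NT) ∈ g.rules ∧
        NullStr g lam ∧ DerStr g mu z) ∨
    (∃ X lam mu, (⟨X, lam ++ Symbol.terminal a :: mu⟩ : ContextFreeRule T g.NT) ∈ g.rules ∧
        NullStr g lam ∧ ∃ v u, z = v ++ u ∧ DerStr g mu v ∧ NSC g C X u) := by
  intro n
  induction n using Nat.strong_induction_on with
  | _ n ih =>
    intro C a z h
    cases h with
    | head hp h' =>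
      rename_i v m
      rcases produces_single_nt hp with ⟨r, hr, hinput, rfl⟩
      rcases decompStr h' with ⟨lam, σ, mu, z₁, z₂, hout, hlam, rfl, hmu, hcase⟩
      rcases hcase with ⟨rfl, rfl⟩ | ⟨D, rfl, n₁, hn₁, hder⟩
      · left
        refine ⟨lam, mu, ?_, hlam, by simpa using hmu⟩
        have : r = ⟨C, lam ++ Symbol.terminal a :: mu⟩ := by
          cases r; simp_all
        rwa [this] at hr
      · -- σ = nonterminal D
        have hrC : (⟨C, lam ++ Symbol.nonterminal D :: mu⟩ : ContextFreeRule T g.NT) ∈ g.rules := by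
          have : r = ⟨C, lam ++ Symbol.nonterminal D :: mu⟩ := by
            cases r; simp_all
          rwa [this] at hr
        have hlt : n₁ < m + 1 := by omega
        rcases ih n₁ hlt hder with ⟨lam', mu', hr', hlam', hmu'⟩ |
            ⟨X, lam', mu', hr', hlam', v', u', rfl, hmu', hnsc⟩
        · -- D rewrites directly: spine of length 1 from C through D
          right
          exact ⟨D, lam', mu', hr', hlam', z₁, z₂, rfl,
            hmu', NSC.base hrC hlam hmu⟩
        · -- spine through D extended at the bottom by rule C → lam D mu
          right
          refine ⟨X, lam', mu', hr', hlam', v', u' ++ z₂, by simp, hmu', ?_⟩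
          exact hnsc.bottom hrC hlam hmu

/-! ### The finite symbol alphabet and its semantics -/

variable (g) in
/-- All symbols relevant to `g`. -/
def masterList : List (Symbol T g.NT) :=
  Symbol.nonterminal g.initial ::
    g.rules.toList.flatMap (fun r => Symbol.nonterminal r.input :: r.output)

variable (g) in
/-- A bound on the length of right-hand sides of rules. -/
def maxR : ℕ := (g.rules.toList.map (fun r => r.output.length)).foldr max 0

lemma foldr_max_le_aux {α : Type} (f : α → ℕ) :
    ∀ (l : List α) (r : α), r ∈ l → f r ≤ (l.map f).foldr max 0 := by
  intro l
  induction l with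
  | nil => intro r hr; cases hr
  | cons r' l ih =>
    intro r hr
    simp only [List.map_cons, List.foldr_cons]
    rcases List.mem_cons.mp hr with rfl | h
    · exact Nat.le_max_left _ _
    · exact le_trans (ih r h) (Nat.le_max_right _ _)

lemma output_length_le_maxR {r : ContextFreeRule T g.NT} (hr : r ∈ g.rules) :
    r.output.length ≤ maxR g :=
  foldr_max_le_aux (fun r => r.output.length) _ r (Finset.mem_toList.mpr hr)

lemma initial_mem_masterList : Symbol.nonterminal g.initial ∈ masterList g := by
  simp [masterList]

lemma input_mem_masterList {r : ContextFreeRule T g.NT} (hr : r ∈ g.rules) :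
    Symbol.nonterminal r.input ∈ masterList g := by
  simp only [masterList, List.mem_cons, List.mem_flatMap]
  right
  exact ⟨r, Finset.mem_toList.mpr hr, by simp⟩

lemma output_mem_masterList {r : ContextFreeRule T g.NT} (hr : r ∈ g.rules)
    {σ : Symbol T g.NT} (hσ : σ ∈ r.output) : σ ∈ masterList g := by
  simp only [masterList, List.mem_cons, List.mem_flatMap]
  right
  exact ⟨r, Finset.mem_toList.mpr hr, by simp [hσ]⟩

variable (g) in
/-- Index type for the master list. -/
def Idx : Type := Fin (masterList g).length

instance : Fintype (Idx g) := by unfold Idx; infer_instance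
instance : DecidableEq (Idx g) := by unfold Idx; infer_instance

variable (g) in
def getS (i : Idx g) : Symbol T g.NT := (masterList g).get i

lemma exists_idx {σ : Symbol T g.NT} (h : σ ∈ masterList g) : ∃ i : Idx g, getS g i = σ := by
  rcases List.mem_iff_get.mp h with ⟨i, hi⟩
  exact ⟨i, hi⟩

variable (g) in
/-- The stack/buffer symbol type: single symbols or spine pairs. -/
def SymT : Type := Idx g ⊕ Idx g × Idx g

instance : Fintype (SymT g) := by unfold SymT; infer_instance

variable (g) in
def SemN (C : g.NT) : Language T :=
  {w | w ≠ [] ∧ g.Derives [Symbol.nonterminal C] (w.map Symbol.terminal)}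

variable (g) in
def SemSym : Symbol T g.NT → Language T
  | .terminal a => {w | w = [a]}
  | .nonterminal C => SemN g C

variable (g) in
def SemPair (s t : Symbol T g.NT) : Language T :=
  {w | w ≠ [] ∧ ∃ C X, s = Symbol.nonterminal C ∧ t = Symbol.nonterminal X ∧ NSC g C X w}

variable (g) in
def Lang : SymT g → Language T
  | .inl i => SemSym g (getS g i)
  | .inr p => SemPair g (getS g p.1) (getS g p.2)

lemma lang_not_nil (s : SymT g) : [] ∉ Lang g s := by
  cases s with
  | inl i =>
    cases h : getS g i with
    | terminal a =>
      intro hh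
      rw [show (Lang g (Sum.inl i)) = {w | w = [a]} by simp [Lang, SemSym, h]; rfl] at hh
      cases hh
    | nonterminal C =>
      intro hh
      simp only [Lang, SemSym, h, SemN, Set.mem_setOf_eq] at hh
      exact hh.1 rfl
  | inr p =>
    intro hh
    simp only [Lang, SemPair, Set.mem_setOf_eq] at hh
    exact hh.1 rfl

/-- membership in the product language of a list of symbols -/
inductive LS (g : ContextFreeGrammar.{0} T) : List (SymT g) → List T → Prop
  | nil : LS g [] []
  | cons {s : SymT g} {u : List (SymT g)} {w v : List T} :
      w ∈ Lang g s → LS g u v → LS g (s :: u) (w ++ v)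

lemma LS.append {u₁ u₂ : List (SymT g)} {w₁ w₂ : List T}
    (h₁ : LS g u₁ w₁) (h₂ : LS g u₂ w₂) : LS g (u₁ ++ u₂) (w₁ ++ w₂) := by
  induction h₁ with
  | nil => exact h₂
  | cons hw _ ih => rw [List.append_assoc]; exact LS.cons hw ih

lemma LS.nil_inv {w : List T} (h : LS g [] w) : w = [] := by cases h; rfl

lemma LS.cons_inv {s : SymT g} {u : List (SymT g)} {z : List T} (h : LS g (s :: u) z) :
    ∃ w v, z = w ++ v ∧ w ∈ Lang g s ∧ LS g u v := by
  cases h with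
  | cons hw hu => exact ⟨_, _, rfl, hw, hu⟩

lemma LS.split {u₁ u₂ : List (SymT g)} {z : List T} (h : LS g (u₁ ++ u₂) z) :
    ∃ z₁ z₂, z = z₁ ++ z₂ ∧ LS g u₁ z₁ ∧ LS g u₂ z₂ := by
  induction u₁ generalizing z with
  | nil => exact ⟨[], z, rfl, LS.nil, h⟩
  | cons s u₁ ih =>
    rcases h.cons_inv with ⟨w, v, rfl, hw, hv⟩
    rcases ih hv with ⟨z₁, z₂, rfl, h1, h2⟩
    exact ⟨w ++ z₁, z₂, by simp, LS.cons hw h1, h2⟩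

lemma LS.single {s : SymT g} {w : List T} (h : w ∈ Lang g s) : LS g [s] w := by
  have := LS.cons h LS.nil
  simpa using this

/-! ### Building symbol lists from derivations -/

lemma buildU {mu : List (Symbol T g.NT)} (hsub : ∀ σ ∈ mu, σ ∈ masterList g) :
    ∀ {z : List T}, DerStr g mu z →
    ∃ u : List (SymT g), u.length ≤ mu.length ∧ LS g u z ∧
      ∀ z', LS g u z' → DerStr g mu z' := by
  induction mu with
  | nil =>
    intro z h
    have hz := derStr_nil_iff h
    subst hz
    refine ⟨[], by simp, LS.nil, ?_⟩
    intro z' hz'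
    have := hz'.nil_inv
    subst this
    exact Relation.ReflTransGen.refl
  | cons σ mu ih =>
    intro z h
    rcases derStr_split (x := [σ]) h with ⟨z₁, z₂, rfl, h1, h2⟩
    have hsub' : ∀ σ' ∈ mu, σ' ∈ masterList g := fun σ' hσ' => hsub σ' (by simp [hσ'])
    rcases ih hsub' h2 with ⟨u', hlen, hls, hrec⟩
    cases σ with
    | terminal b =>
      have hz₁ := derives_single_terminal h1
      have : z₁ = [b] := by
        cases z₁ with
        | nil => simp at hz₁
        | cons c z₁' => simp at hz₁; simp [hz₁]
      subst this
      rcases exists_idx (hsub (Symbol.terminal b) (by simp)) with ⟨i, hi⟩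
      refine ⟨Sum.inl i :: u', Nat.succ_le_succ hlen, ?_, ?_⟩
      · refine LS.cons ?_ hls
        show [b] ∈ Lang g (Sum.inl i)
        rw [show Lang g (Sum.inl i) = {w | w = [b]} from by simp [Lang, SemSym, hi]; rfl]
        exact rfl
      · intro z' hz'
        rcases hz'.cons_inv with ⟨w, v, rfl, hw, hv⟩
        rw [show Lang g (Sum.inl i) = {w | w = [b]} from by simp [Lang, SemSym, hi]; rfl] at hw
        have hwb : w = [b] := hw
        subst hwb
        have h3 := derives_append_both (Relation.ReflTransGen.refl
          (a := [Symbol.terminal b])) (hrec v hv)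
        show g.Derives (Symbol.terminal b :: mu) (([b] ++ v).map Symbol.terminal)
        simpa using h3
    | nonterminal D =>
      cases z₁ with
      | nil =>
        refine ⟨u', le_trans hlen (by simp), by simpa using hls, ?_⟩
        intro z' hz'
        have hder := hrec z' hz'
        have : g.Derives ([Symbol.nonterminal D] ++ mu) ([] ++ z'.map Symbol.terminal) :=
          derives_append_both (by simpa [DerStr] using h1) hder
        simpa [DerStr] using this
      | cons c z₁' =>
        rcases exists_idx (hsub (Symbol.nonterminal D) (by simp)) with ⟨i, hi⟩
        refine ⟨Sum.inl i :: u', Nat.succ_le_succ hlen, ?_, ?_⟩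
        · refine LS.cons ?_ hls
          show (c :: z₁') ∈ Lang g (Sum.inl i)
          rw [show (Lang g (Sum.inl i)) = SemN g D by simp [Lang, SemSym, hi]]
          exact ⟨by simp, h1⟩
        · intro z' hz'
          rcases hz'.cons_inv with ⟨w, v, rfl, hw, hv⟩
          rw [show (Lang g (Sum.inl i)) = SemN g D by simp [Lang, SemSym, hi]] at hw
          have h3 := derives_append_both hw.2 (hrec v hv)
          show g.Derives (Symbol.nonterminal D :: mu) ((w ++ v).map Symbol.terminal)
          simpa using h3

lemma decompStr' {eta : List (Symbol T g.NT)} {a : T} {z : List T}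
    (h : DerStr g eta (a :: z)) :
    ∃ lam σ mu z₁ z₂, eta = lam ++ σ :: mu ∧ NullStr g lam ∧ z = z₁ ++ z₂ ∧ DerStr g mu z₂ ∧
      ((σ = Symbol.terminal a ∧ z₁ = []) ∨
        ∃ D, σ = Symbol.nonterminal D ∧
          g.Derives [Symbol.nonterminal D] ((a :: z₁).map Symbol.terminal)) := by
  rcases derives_iff_derivesIn.mp h with ⟨n, hn⟩
  rcases decompStr hn with ⟨lam, σ, mu, z₁, z₂, h1, h2, h3, h4, h5⟩
  refine ⟨lam, σ, mu, z₁, z₂, h1, h2, h3, h4, ?_⟩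
  rcases h5 with h5 | ⟨D, hD, n₁, -, hder⟩
  · exact Or.inl h5
  · exact Or.inr ⟨D, hD, hder.toDerives⟩

lemma derive_rule_head {C : g.NT} {lam mu : List (Symbol T g.NT)} {a : T} {z : List T}
    (hr : (⟨C, lam ++ Symbol.terminal a :: mu⟩ : ContextFreeRule T g.NT) ∈ g.rules)
    (hlam : NullStr g lam) (hmu : DerStr g mu z) :
    g.Derives [Symbol.nonterminal C] ((a :: z).map Symbol.terminal) := by
  have h1 := (produces_head (s := []) hr).trans_derives
    (show g.Derives ((lam ++ Symbol.terminal a :: mu) ++ [])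
        (([] ++ Symbol.terminal a :: z.map Symbol.terminal) ++ []) from
      Derives.append_right
        (derives_append_both hlam (hmu.append_left [Symbol.terminal a])) [])
  simpa using h1

lemma derive_rule_spine {C X : g.NT} {lam mu : List (Symbol T g.NT)} {a : T} {z u : List T}
    (hnsc : NSC g C X u)
    (hr : (⟨X, lam ++ Symbol.terminal a :: mu⟩ : ContextFreeRule T g.NT) ∈ g.rules)
    (hlam : NullStr g lam) (hmu : DerStr g mu z) :
    g.Derives [Symbol.nonterminal C] ((a :: (z ++ u)).map Symbol.terminal) := by
  refine hnsc.sound.trans ?_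
  have h1 := (produces_head (s := u.map Symbol.terminal) hr).trans_derives
    (show g.Derives ((lam ++ Symbol.terminal a :: mu) ++ u.map Symbol.terminal)
        (([] ++ Symbol.terminal a :: z.map Symbol.terminal) ++ u.map Symbol.terminal) from
      Derives.append_right
        (derives_append_both hlam (hmu.append_left [Symbol.terminal a])) _)
  simpa using h1

/-- Core lemma for a single nonterminal. -/
lemma coreN {C : g.NT} {a : T} {z : List T}
    (hC : Symbol.nonterminal C ∈ masterList g)
    (h : g.Derives [Symbol.nonterminal C] ((a :: z).map Symbol.terminal)) :
    ∃ u : List (SymT g), u.length ≤ maxR g + 1 ∧ LS g u z ∧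
      ∀ z', LS g u z' → g.Derives [Symbol.nonterminal C] ((a :: z').map Symbol.terminal) := by
  rcases derives_iff_derivesIn.mp h with ⟨n, hn⟩
  rcases coreDecomp n hn with ⟨lam, mu, hr, hlam, hmu⟩ |
      ⟨X, lam, mu, hr, hlam, v, u'', rfl, hmu, hnsc⟩
  · have hsub : ∀ σ ∈ mu, σ ∈ masterList g := fun σ hσ =>
      output_mem_masterList hr (by simp [hσ])
    rcases buildU hsub hmu with ⟨u, hlen, hls, hrec⟩
    have hmuR : mu.length ≤ maxR g := by
      have := output_length_le_maxR hr
      simp at this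
      omega
    exact ⟨u, by omega, hls, fun z' hz' => derive_rule_head hr hlam (hrec z' hz')⟩
  · have hsub : ∀ σ ∈ mu, σ ∈ masterList g := fun σ hσ =>
      output_mem_masterList hr (by simp [hσ])
    rcases buildU hsub hmu with ⟨u, hlen, hls, hrec⟩
    have hmuR : mu.length ≤ maxR g := by
      have := output_length_le_maxR hr
      simp at this
      omega
    rcases exists_idx hC with ⟨iC, hiC⟩
    have hXmem : Symbol.nonterminal X ∈ masterList g := input_mem_masterList hr
    rcases exists_idx hXmem with ⟨iX, hiX⟩
    cases u'' with
    | nil =>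
      refine ⟨u, by omega, by simpa using hls, ?_⟩
      intro z' hz'
      have := derive_rule_spine hnsc hr hlam (hrec z' hz')
      simpa using this
    | cons c u'' =>
      refine ⟨u ++ ([Sum.inr (iC, iX)] : List (SymT g)), by have h1 := List.length_append (as := u) (bs := ([Sum.inr (iC, iX)] : List (SymT g))); have h2 : ([Sum.inr (iC, iX)] : List (SymT g)).length = 1 := rfl; omega, ?_, ?_⟩
      · refine LS.append hls (LS.single ?_)
        show (c :: u'') ∈ Lang g (Sum.inr (iC, iX))
        exact ⟨by simp, C, X, hiC, hiX, hnsc⟩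
      · intro z' hz'
        rcases hz'.split with ⟨z₁, z₂, rfl, hz₁, hz₂⟩
        rcases hz₂.cons_inv with ⟨w, v', hwv, hw, hv'⟩
        have hv'nil := hv'.nil_inv
        subst hv'nil
        rcases hw with ⟨hne, C', X', hC', hX', hnsc'⟩
        rw [hiC] at hC'
        rw [hiX] at hX'
        cases Symbol.nonterminal.inj hC'
        cases Symbol.nonterminal.inj hX'
        have := derive_rule_spine hnsc' hr hlam (hrec z₁ hz₁)
        rw [hwv]
        simpa using this

/-- Core lemma for strings: expansion absorbing a leading terminal. -/
lemma coreStr {mu : List (Symbol T g.NT)} {a : T} {v : List T}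
    (hsub : ∀ σ ∈ mu, σ ∈ masterList g) (h : DerStr g mu (a :: v)) :
    ∃ u : List (SymT g), u.length ≤ mu.length + maxR g + 1 ∧ LS g u v ∧
      ∀ v', LS g u v' → DerStr g mu (a :: v') := by
  rcases decompStr' h with ⟨lam, σ, mu₂, v₁, v₂, rfl, hlam, rfl, hmu₂, hcase⟩
  have hsub₂ : ∀ σ' ∈ mu₂, σ' ∈ masterList g := fun σ' hσ' => hsub σ' (by simp [hσ'])
  rcases buildU hsub₂ hmu₂ with ⟨u₂, hlen₂, hls₂, hrec₂⟩
  rcases hcase with ⟨rfl, rfl⟩ | ⟨D, rfl, hder⟩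
  · refine ⟨u₂, by simp; omega, by simpa using hls₂, ?_⟩
    intro v' hv'
    have h3 := derives_append_both hlam
      ((hrec₂ v' hv').append_left [Symbol.terminal a])
    show g.Derives (lam ++ Symbol.terminal a :: mu₂) ((a :: v').map Symbol.terminal)
    simpa using h3
  · have hD : Symbol.nonterminal D ∈ masterList g := hsub _ (by simp)
    rcases coreN hD hder with ⟨uD, hlenD, hlsD, hrecD⟩
    refine ⟨uD ++ u₂, by simp; omega, LS.append hlsD hls₂, ?_⟩
    intro v' hv'
    rcases hv'.split with ⟨w₁, w₂, rfl, hw₁, hw₂⟩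
    have hDder := hrecD w₁ hw₁
    have hmu₂' := hrec₂ w₂ hw₂
    have h3 := derives_append_both hlam
      (derives_append_both hDder hmu₂')
    show g.Derives (lam ++ Symbol.nonterminal D :: mu₂) ((a :: (w₁ ++ w₂)).map Symbol.terminal)
    simpa using h3

/-- Core lemma for spine pairs. -/
lemma coreP {C X : g.NT} {w : List T} (h : NSC g C X w)
    (hC : Symbol.nonterminal C ∈ masterList g) :
    ∀ {a : T} {z : List T}, w = a :: z →
    ∃ u : List (SymT g), u.length ≤ 2 * maxR g + 2 ∧ LS g u z ∧
      ∀ z', LS g u z' → NSC g C X (a :: z') := by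
  induction h with
  | base hr hlam hmu =>
    rename_i X' lam mu w'
    rintro a z rfl
    have hsub : ∀ σ ∈ mu, σ ∈ masterList g := fun σ hσ =>
      output_mem_masterList hr (by simp [hσ])
    have hmuR : mu.length ≤ maxR g := by
      have := output_length_le_maxR hr
      simp at this
      omega
    rcases coreStr hsub hmu with ⟨u, hlen, hls, hrec⟩
    exact ⟨u, by omega, hls, fun z' hz' => NSC.base hr hlam (hrec z' hz')⟩
  | step hprev hr hlam hmu ih =>
    rename_i Z X' lam mu v w'
    rintro a z heq
    have hsub : ∀ σ ∈ mu, σ ∈ masterList g := fun σ hσ =>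
      output_mem_masterList hr (by simp [hσ])
    have hmuR : mu.length ≤ maxR g := by
      have := output_length_le_maxR hr
      simp at this
      omega
    cases v with
    | nil =>
      simp at heq
      rcases ih heq with ⟨u, hlen, hls, hrec⟩
      refine ⟨u, hlen, hls, ?_⟩
      intro z' hz'
      have := NSC.step (hrec z' hz') hr hlam hmu
      simpa using this
    | cons a' v' =>
      simp at heq
      rcases heq with ⟨rfl, hz⟩
      subst hz
      rcases coreStr hsub hmu with ⟨uf, hlenf, hlsf, hrecf⟩
      cases w' with
      | nil =>
        refine ⟨uf, by omega, by simpa using hlsf, ?_⟩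
        intro z' hz'
        have := NSC.step hprev hr hlam (hrecf z' hz')
        simpa using this
      | cons c w'' =>
        rcases exists_idx hC with ⟨iC, hiC⟩
        rcases exists_idx (input_mem_masterList hr) with ⟨iZ, hiZ⟩
        refine ⟨uf ++ ([Sum.inr (iC, iZ)] : List (SymT g)), by have h1 := List.length_append (as := uf) (bs := ([Sum.inr (iC, iZ)] : List (SymT g))); have h2 : ([Sum.inr (iC, iZ)] : List (SymT g)).length = 1 := rfl; omega, ?_, ?_⟩
        · exact LS.append hlsf (LS.single ⟨by simp, _, _, hiC, hiZ, hprev⟩)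
        · intro z' hz'
          rcases hz'.split with ⟨z₁, z₂, rfl, hz₁, hz₂⟩
          rcases hz₂.cons_inv with ⟨w₀, v₀, hwv, hw₀, hv₀⟩
          have hv₀nil := hv₀.nil_inv
          subst hv₀nil
          rcases hw₀ with ⟨hne, C', Z', hC', hZ', hnsc'⟩
          rw [hiC] at hC'
          rw [hiZ] at hZ'
          cases Symbol.nonterminal.inj hC'
          cases Symbol.nonterminal.inj hZ'
          rw [hwv]
          have := NSC.step hnsc' hr hlam (hrecf z₁ hz₁)
          simpa using this

/-- The full core lemma at the level of stack symbols. -/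
lemma core {s : SymT g} {a : T} {z : List T} (h : (a :: z) ∈ Lang g s) :
    ∃ u : List (SymT g), u.length ≤ 2 * maxR g + 2 ∧ LS g u z ∧
      ∀ z', LS g u z' → (a :: z') ∈ Lang g s := by
  cases s with
  | inl i =>
    cases hgs : getS g i with
    | terminal b =>
      rw [show Lang g (Sum.inl i) = {w | w = [b]} from by simp [Lang, SemSym, hgs]; rfl] at h
      have hab : a :: z = [b] := h
      simp at hab
      rcases hab with ⟨rfl, rfl⟩
      refine ⟨[], by simp, LS.nil, ?_⟩
      intro z' hz'
      have := hz'.nil_inv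
      subst this
      rw [show Lang g (Sum.inl i) = {w | w = [a]} from by simp [Lang, SemSym, hgs]; rfl]
      rfl
    | nonterminal C =>
      rw [show Lang g (Sum.inl i) = SemN g C from by simp [Lang, SemSym, hgs]] at h
      rcases coreN (by rw [← hgs]; exact List.get_mem _ _) h.2 with ⟨u, hlen, hls, hrec⟩
      refine ⟨u, by omega, hls, ?_⟩
      intro z' hz'
      rw [show Lang g (Sum.inl i) = SemN g C from by simp [Lang, SemSym, hgs]]
      exact ⟨by simp, hrec z' hz'⟩
  | inr p =>
    rcases h with ⟨hne, C, X, hC, hX, hnsc⟩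
    have hCm : Symbol.nonterminal C ∈ masterList g := by
      rw [← hC]; exact List.get_mem _ _
    rcases coreP hnsc hCm rfl with ⟨u, hlen, hls, hrec⟩
    exact ⟨u, hlen, hls, fun z' hz' => ⟨by simp, C, X, hC, hX, hrec z' hz'⟩⟩

/-! ### The parse relation -/

variable (g) in
/-- One-symbol expansion bound. -/
def Bnd : ℕ := 2 * maxR g + 2

variable (g) in
/-- `GOOD g s a u`: any word of `u` prefixed with `a` lies in the language of `s`. -/
def GOOD (s : SymT g) (a : T) (u : List (SymT g)) : Prop :=
  ∀ z, LS g u z → (a :: z) ∈ Lang g s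

variable (g) in
/-- one parse step, consuming the input symbol `a` -/
inductive LStep : List (SymT g) → T → List (SymT g) → Prop
  | mk {s : SymT g} {v₀ u : List (SymT g)} {a : T} :
      GOOD g s a u → u.length ≤ Bnd g → LStep (s :: v₀) a (u ++ v₀)

variable (g) in
inductive LSteps : List (SymT g) → List T → List (SymT g) → Prop
  | refl (v) : LSteps v [] v
  | step {v v' v'' : List (SymT g)} {a : T} {w : List T} :
      LStep g v a v' → LSteps v' w v'' → LSteps v (a :: w) v''

lemma LStep.append {v v' t : List (SymT g)} {a : T} (h : LStep g v a v') :
    LStep g (v ++ t) a (v' ++ t) := by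
  cases h with
  | mk hgood hlen =>
    rename_i s v₀ u
    have := LStep.mk (v₀ := v₀ ++ t) hgood hlen
    simpa [List.append_assoc] using this

lemma parse_sound {v : List (SymT g)} {w : List T} (h : LSteps g v w []) : LS g v w := by
  generalize hfin : ([] : List (SymT g)) = fin at h
  induction h with
  | refl v => subst hfin; exact LS.nil
  | step hstep _ ih =>
    rcases hstep with ⟨hgood, hlen⟩
    rename_i s v₀ u a _ w' _
    have hls := ih hfin
    rcases hls.split with ⟨z, z₂, rfl, hz, hz₂⟩
    have := LS.cons (hgood z hz) hz₂
    simpa using this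

lemma ls_nil_word' {v : List (SymT g)} {w : List T} (h : LS g v w) (hw : w = []) :
    v = [] := by
  cases h with
  | nil => rfl
  | cons hlang hrest =>
    exfalso
    rename_i s u w' v'
    rcases List.append_eq_nil_iff.mp hw with ⟨rfl, rfl⟩
    exact lang_not_nil _ hlang

lemma ls_nil_word {v : List (SymT g)} (h : LS g v []) : v = [] :=
  ls_nil_word' h rfl

lemma parse_complete_aux : ∀ n (w : List T) (v : List (SymT g)),
    w.length ≤ n → LS g v w → LSteps g v w [] := by
  intro n
  induction n with
  | zero =>
    intro w v hw hls
    have : w = [] := by cases w <;> simp_all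
    subst this
    rw [ls_nil_word hls]
    exact LSteps.refl []
  | succ n ih =>
    intro w v hw hls
    cases hls with
    | nil => exact LSteps.refl []
    | cons hw₁ hrest =>
      rename_i s u w₁ v₂
      cases w₁ with
      | nil => exact absurd hw₁ (lang_not_nil s)
      | cons a z₁ =>
        rcases core hw₁ with ⟨uu, hlen, hlsu, hrec⟩
        have hstep : LStep g (s :: u) a (uu ++ u) :=
          LStep.mk (fun z hz => hrec z hz) hlen
        have hls' : LS g (uu ++ u) (z₁ ++ v₂) := LS.append hlsu hrest
        have hlen' : (z₁ ++ v₂).length ≤ n := by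
          simp at hw ⊢
          omega
        exact LSteps.step hstep (ih _ _ hlen' hls')

lemma parse_complete {v : List (SymT g)} {w : List T} (h : LS g v w) :
    LSteps g v w [] :=
  parse_complete_aux w.length w v le_rfl h

/-! ### Encoding bounded lists into finite function types -/

lemma reduceOption_ofFn_none {α : Type} : ∀ B : ℕ,
    (List.ofFn (fun _ : Fin B => (none : Option α))).reduceOption = [] := by
  intro B
  induction B with
  | zero => rw [List.ofFn_zero]; rfl
  | succ B ih => rw [List.ofFn_succ]; simpa using ih

lemma reduceOption_ofFn_getElem? {α : Type} : ∀ (B : ℕ) (l : List α), l.length ≤ B →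
    (List.ofFn (fun i : Fin B => l[i.1]?)).reduceOption = l := by
  intro B
  induction B with
  | zero =>
    intro l hl
    have : l = [] := List.length_eq_zero_iff.mp (by omega)
    subst this
    simp
  | succ B ih =>
    intro l hl
    rw [List.ofFn_succ]
    cases l with
    | nil =>
      simp only [List.getElem?_nil]
      rw [List.reduceOption_cons_of_none]
      exact reduceOption_ofFn_none B
    | cons x l' =>
      have h0 : ((x :: l')[((0 : Fin (B+1)) : ℕ)]?) = some x := by simp
      rw [h0, List.reduceOption_cons_of_some]
      have hrec := ih l' (by simpa using hl)
      have h1 : (fun i : Fin B => (x :: l')[((i.succ : Fin (B+1)) : ℕ)]?)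
          = fun i : Fin B => l'[(i : ℕ)]? := by
        funext i
        simp
      rw [h1, hrec]

variable (g) in
/-- Buffer type: encodes a list of at most `2 * Bnd g` symbols. -/
def Buf : Type := Fin (2 * Bnd g) → Option (SymT g)

instance : Fintype (Buf g) := by unfold Buf; infer_instance

variable (g) in
def dec (f : Buf g) : List (SymT g) := (List.ofFn f).reduceOption

variable (g) in
def enc (l : List (SymT g)) : Buf g := fun i => l[i.1]?

lemma dec_enc {l : List (SymT g)} (h : l.length ≤ 2 * Bnd g) : dec g (enc g l) = l :=
  reduceOption_ofFn_getElem? _ l h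

variable (g) in
def i0 : Idx g := ⟨0, by simp [masterList]⟩

lemma getS_i0 : getS g (i0 g) = Symbol.nonterminal g.initial := rfl

variable (g) in
def dq : Option (Buf g) → List (SymT g)
  | none => [Sum.inl (i0 g)]
  | some f => dec g f

variable (g) in
/-- The restricted PDA for `g`; `e` is the proposition "the empty word is in the language". -/
def mach (e : Prop) : RestrictedPDA (Option (Buf g)) T (Option (Buf g)) where
  start := none
  bot := none
  pushTrans q a x r y :=
    ∃ fr fy, r = some fr ∧ y = some fy ∧ LStep g (dq g q) a (dec g fr ++ dec g fy)
  replTrans q a x r y := ∃ fr, r = some fr ∧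
    ((∃ fx fy, x = some fx ∧ y = some fy ∧
        LStep g (dq g q ++ dec g fx) a (dec g fr ++ dec g fy)) ∨
      (x = none ∧ y = none ∧ LStep g (dq g q) a (dec g fr)))
  popTrans q a x r :=
    ∃ fr fx, r = some fr ∧ x = some fx ∧ LStep g (dq g q ++ dec g fx) a (dec g fr)
  accept := {q | (q = none ∧ e) ∨ ∃ f, q = some f ∧ dec g f = []}

variable (g) in
def Content : List (Option (Buf g)) → List (SymT g)
  | [] => []
  | none :: st => Content st
  | some f :: st => dec g f ++ Content st

@[simp] lemma content_nil : Content g [] = [] := rfl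
@[simp] lemma content_cons_none {st} : Content g (none :: st) = Content g st := rfl
@[simp] lemma content_cons_some {f st} : Content g (some f :: st) = dec g f ++ Content g st := rfl

variable (g) in
def Shaped (st : List (Option (Buf g))) : Prop :=
  ∃ bs : List (Buf g), st = bs.map some ++ [none]

lemma step_sound {e : Prop} {q q' : Option (Buf g)} {st st' : List (Option (Buf g))} {a : T}
    (h : (mach g e).Step (q, st) a (q', st')) (hs : Shaped g st) :
    Shaped g st' ∧ LStep g (dq g q ++ Content g st) a (dq g q' ++ Content g st') := by
  cases h with
  | push hp =>
    rcases hp with ⟨fr, fy, rfl, rfl, hstep⟩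
    rcases hs with ⟨bs, heq⟩
    rename_i x β
    constructor
    · exact ⟨fy :: bs, by simp [heq]⟩
    · have := hstep.append (t := Content g (x :: β))
      simpa [dq, List.append_assoc] using this
  | repl hp =>
    rcases hp with ⟨fr, rfl, ⟨fx, fy, hx, rfl, hstep⟩ | ⟨hx, rfl, hstep⟩⟩
    · subst hx
      rcases hs with ⟨bs, heq⟩
      cases bs with
      | nil => exfalso; simp at heq
      | cons b bs' =>
        simp only [List.map_cons, List.cons_append, List.cons.injEq] at heq
        rcases heq with ⟨-, hβ⟩
        subst hβ
        constructor
        · exact ⟨fy :: bs', by simp⟩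
        · have := hstep.append (t := Content g (List.map some bs' ++ [none]))
          simpa [dq, List.append_assoc] using this
    · subst hx
      rcases hs with ⟨bs, heq⟩
      cases bs with
      | nil =>
        simp only [List.map_nil, List.nil_append, List.cons.injEq] at heq
        rcases heq with ⟨-, hβ⟩
        subst hβ
        refine ⟨⟨[], by simp⟩, ?_⟩
        have := hstep.append (t := ([] : List (SymT g)))
        simpa [dq] using this
      | cons b bs' => exfalso; simp at heq
  | pop hp =>
    rcases hp with ⟨fr, fx, rfl, hx, hstep⟩
    subst hx
    rcases hs with ⟨bs, heq⟩
    cases bs with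
    | nil => exfalso; simp at heq
    | cons b bs' =>
      simp only [List.map_cons, List.cons_append, List.cons.injEq, Option.some.injEq] at heq
      rcases heq with ⟨hbfx, hβ⟩
      subst hβ
      subst hbfx
      refine ⟨⟨bs', rfl⟩, ?_⟩
      have := hstep.append (t := Content g (List.map some bs' ++ [none]))
      simpa [dq, List.append_assoc] using this

lemma scans_sound {e : Prop} :
    ∀ {c c' : Option (Buf g) × List (Option (Buf g))} {w : List T},
    (mach g e).Scans c w c' → Shaped g c.2 →
    Shaped g c'.2 ∧ LSteps g (dq g c.1 ++ Content g c.2) w (dq g c'.1 ++ Content g c'.2) := by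
  intro c c' w h
  induction h with
  | refl c => exact fun hs => ⟨hs, LSteps.refl _⟩
  | step hstep hscans ih =>
    intro hs
    rename_i c c₁ c₂ a w'
    obtain ⟨q, st⟩ := c
    obtain ⟨q₁, st₁⟩ := c₁
    rcases step_sound hstep hs with ⟨hs₁, hl₁⟩
    rcases ih hs₁ with ⟨hs₂, hl₂⟩
    exact ⟨hs₂, LSteps.step hl₁ hl₂⟩

lemma step_target_some {e : Prop} {c : Option (Buf g) × List (Option (Buf g))} {a : T}
    {r : Option (Buf g)} {st' : List (Option (Buf g))}
    (h : (mach g e).Step c a (r, st')) : ∃ f, r = some f := by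
  cases h with
  | push hp => rcases hp with ⟨fr, fy, rfl, -⟩; exact ⟨fr, rfl⟩
  | repl hp => rcases hp with ⟨fr, rfl, -⟩; exact ⟨fr, rfl⟩
  | pop hp => rcases hp with ⟨fr, fx, rfl, -⟩; exact ⟨fr, rfl⟩

lemma step_target_some' {e : Prop} {c c' : Option (Buf g) × List (Option (Buf g))} {a : T}
    (h : (mach g e).Step c a c') : ∃ f, c'.1 = some f := by
  cases h with
  | push hp => rcases hp with ⟨fr, fy, rfl, -⟩; exact ⟨fr, rfl⟩
  | repl hp => rcases hp with ⟨fr, rfl, -⟩; exact ⟨fr, rfl⟩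
  | pop hp => rcases hp with ⟨fr, fx, rfl, -⟩; exact ⟨fr, rfl⟩

lemma scans_to_none {e : Prop} {c c' : Option (Buf g) × List (Option (Buf g))} {w : List T}
    (h : (mach g e).Scans c w c') (hn : c'.1 = none) : w = [] ∧ c = c' := by
  induction h with
  | refl c => exact ⟨rfl, rfl⟩
  | step hstep hscans ih =>
    exfalso
    obtain ⟨-, hceq⟩ := ih hn
    rcases step_target_some' hstep with ⟨f, hf⟩
    rw [hceq, hn] at hf
    cases hf

lemma bnd_ge_two : 2 ≤ Bnd g := by unfold Bnd; omega

lemma stage2 {e : Prop} :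
    ∀ {v : List (SymT g)} {w : List T} {fin : List (SymT g)}, LSteps g v w fin → fin = [] →
    ∀ (u : List (SymT g)) (bs : List (List (SymT g))) (q : Option (Buf g)),
    v = u ++ bs.flatten →
    dq g q = u → u.length ≤ 2 * Bnd g →
    (∀ b ∈ bs, b.length ≤ 2 * Bnd g ∧ b ≠ []) →
    (u = [] → bs = []) →
    ∃ f : Buf g, dec g f = [] ∧
      (mach g e).Scans (q, bs.map (fun b => some (enc g b)) ++ [none]) w (some f, [none]) := by
  intro v w fin h
  induction h with
  | refl v =>
    rintro rfl u bs q hv hdq hlen hbs hinv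
    have hu : u = [] := by
      cases u with
      | nil => rfl
      | cons s u' => exfalso; simp at hv
    subst hu
    have hbs' : bs = [] := hinv rfl
    subst hbs'
    cases q with
    | none => exfalso; simp [dq] at hdq
    | some f => exact ⟨f, hdq, RestrictedPDA.Scans.refl _⟩
  | step hstep hrest ih =>
    intro hfin' u bs q hv hdq hlen hbs hinv
    rcases hstep with ⟨hgood, hulen⟩
    rename_i a w' s v₀ u'
    cases u with
    | nil =>
      exfalso
      have := hinv rfl
      subst this
      simp at hv
    | cons s' ut =>
      rw [List.cons_append] at hv
      injection hv with h1 h2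
      subst h1
      subst h2
      have hBnd := bnd_ge_two (g := g)
      have hutlen : ut.length + 1 ≤ 2 * Bnd g := by simpa using hlen
      have hstep_core : LStep g (s :: ut) a (u' ++ ut) := LStep.mk hgood hulen
      have hstep_core_b : ∀ b : List (SymT g),
          LStep g (s :: (ut ++ b)) a ((u' ++ ut) ++ b) := by
        intro b
        have := LStep.mk (v₀ := ut ++ b) hgood hulen
        simpa [List.append_assoc] using this
      by_cases hbig : 2 * Bnd g < (u' ++ ut).length
      · -- push a block
        have hbig' : 2 * Bnd g < u'.length + ut.length := by
          have := List.length_append (as := u') (bs := ut)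
          omega
        have hsplit : (u' ++ ut).take ((u' ++ ut).length - Bnd g)
            ++ (u' ++ ut).drop ((u' ++ ut).length - Bnd g) = u' ++ ut :=
          List.take_append_drop _ _
        have hblklen : ((u' ++ ut).drop ((u' ++ ut).length - Bnd g)).length = Bnd g := by
          simp [List.length_drop, List.length_append]
          omega
        have hnewulen : ((u' ++ ut).take ((u' ++ ut).length - Bnd g)).length
            = u'.length + ut.length - Bnd g := by
          simp [List.length_take, List.length_append]
          try omega
        have hdecnew := dec_enc (g := g)
          (l := (u' ++ ut).take ((u' ++ ut).length - Bnd g)) (by rw [hnewulen]; omega)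
        have hdecblk := dec_enc (g := g)
          (l := (u' ++ ut).drop ((u' ++ ut).length - Bnd g)) (by rw [hblklen]; omega)
        have htrans : ∀ x, (mach g e).pushTrans q a x
            (some (enc g ((u' ++ ut).take ((u' ++ ut).length - Bnd g))))
            (some (enc g ((u' ++ ut).drop ((u' ++ ut).length - Bnd g)))) := by
          intro x
          refine ⟨_, _, rfl, rfl, ?_⟩
          rw [hdecnew, hdecblk, hdq, hsplit]
          exact hstep_core
        rcases ih hfin'
            ((u' ++ ut).take ((u' ++ ut).length - Bnd g))
            ((u' ++ ut).drop ((u' ++ ut).length - Bnd g) :: bs)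
            (some (enc g ((u' ++ ut).take ((u' ++ ut).length - Bnd g))))
            (by rw [List.flatten_cons, ← List.append_assoc, ← List.append_assoc, hsplit])
            hdecnew (by rw [hnewulen]; omega)
            (by intro b hb
                rcases List.mem_cons.mp hb with rfl | hb
                · refine ⟨by rw [hblklen]; omega, ?_⟩
                  intro hnil
                  rw [hnil] at hblklen
                  simp at hblklen
                  omega
                · exact hbs b hb)
            (by intro hne
                exfalso
                rw [hne] at hnewulen
                simp at hnewulen
                omega)
          with ⟨f₀, hdecf₀, hscans⟩
        refine ⟨f₀, hdecf₀, ?_⟩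
        cases bs with
        | nil =>
          refine RestrictedPDA.Scans.step (RestrictedPDA.Step.push (htrans none)) ?_
          simpa using hscans
        | cons b₁ rest =>
          refine RestrictedPDA.Scans.step
            (RestrictedPDA.Step.push (htrans (some (enc g b₁)))) ?_
          simpa using hscans
      · by_cases hfnil : u' ++ ut = []
        · rcases List.append_eq_nil_iff.mp hfnil with ⟨hu', hut⟩
          subst hu'
          subst hut
          cases bs with
          | nil =>
            have htrans : (mach g e).replTrans q a none (some (enc g [])) none := by
              refine ⟨enc g [], rfl, Or.inr ⟨rfl, rfl, ?_⟩⟩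
              rw [dec_enc (by simp), hdq]
              simpa using hstep_core
            rcases ih hfin' [] [] (some (enc g []))
                (by simp)
                (dec_enc (by simp)) (by simp)
                (by intro b hb; cases hb) (fun _ => rfl)
              with ⟨f₀, hdecf₀, hscans⟩
            refine ⟨f₀, hdecf₀, ?_⟩
            refine RestrictedPDA.Scans.step (RestrictedPDA.Step.repl htrans) ?_
            simpa using hscans
          | cons b rest =>
            have hblen := (hbs b (by simp)).1
            have htrans : (mach g e).popTrans q a (some (enc g b)) (some (enc g b)) := by
              refine ⟨enc g b, enc g b, rfl, rfl, ?_⟩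
              rw [dec_enc (by omega), hdq]
              simpa using hstep_core_b b
            rcases ih hfin' b rest (some (enc g b))
                (by simp)
                (dec_enc (by omega)) (by omega)
                (fun b' hb' => hbs b' (by simp [hb']))
                (fun hne => absurd hne (hbs b (by simp)).2)
              with ⟨f₀, hdecf₀, hscans⟩
            exact ⟨f₀, hdecf₀, RestrictedPDA.Scans.step (RestrictedPDA.Step.pop htrans) hscans⟩
        · have hflen : (u' ++ ut).length ≤ 2 * Bnd g := by omega
          cases bs with
          | nil =>
            have htrans : (mach g e).replTrans q a none (some (enc g (u' ++ ut))) none := by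
              refine ⟨enc g (u' ++ ut), rfl, Or.inr ⟨rfl, rfl, ?_⟩⟩
              rw [dec_enc hflen, hdq]
              exact hstep_core
            rcases ih hfin' (u' ++ ut) [] (some (enc g (u' ++ ut)))
                (by simp)
                (dec_enc hflen) hflen
                (by intro b hb; cases hb) (fun hne => absurd hne hfnil)
              with ⟨f₀, hdecf₀, hscans⟩
            refine ⟨f₀, hdecf₀, ?_⟩
            refine RestrictedPDA.Scans.step (RestrictedPDA.Step.repl htrans) ?_
            simpa using hscans
          | cons b rest =>
            have hblen := (hbs b (by simp)).1
            have htrans : (mach g e).replTrans q a (some (enc g b))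
                (some (enc g (u' ++ ut))) (some (enc g b)) := by
              refine ⟨enc g (u' ++ ut), rfl, Or.inl ⟨enc g b, enc g b, rfl, rfl, ?_⟩⟩
              rw [dec_enc hflen, dec_enc (by omega), hdq]
              exact hstep_core_b b
            rcases ih hfin' (u' ++ ut) (b :: rest) (some (enc g (u' ++ ut)))
                (by simp [List.append_assoc])
                (dec_enc hflen) hflen
                hbs (fun hne => absurd hne hfnil)
              with ⟨f₀, hdecf₀, hscans⟩
            exact ⟨f₀, hdecf₀,
              RestrictedPDA.Scans.step (RestrictedPDA.Step.repl htrans) hscans⟩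

lemma lang_i0 : Lang g (Sum.inl (i0 g)) = SemN g g.initial := by
  simp [Lang, SemSym, getS_i0]

@[simp] lemma mach_start {e : Prop} : (mach g e).start = none := rfl
@[simp] lemma mach_bot {e : Prop} : (mach g e).bot = none := rfl

end
end RPDAProof

/-- Every context-free language is recognized by a restricted PDA; in particular, every
context-free language is recognized by a real-time nondeterministic pushdown automaton
(one in which every transition scans exactly one input symbol). -/
theorem isContextFree_iff_exists_restrictedPDA {T : Type} (L : Language T)
    (hL : L.IsContextFree) :
    ∃ (Q S : Type) (_ : Fintype Q) (_ : Fintype S) (M : RestrictedPDA Q T S),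
      M.language = L := by
  classical
  obtain ⟨g, hg⟩ := hL
  open RPDAProof in
  refine ⟨Option (Buf g), Option (Buf g), inferInstance, inferInstance,
    RPDAProof.mach g ([] ∈ L), ?_⟩
  ext w
  constructor
  · rintro ⟨r, hr, β, hscans⟩
    rcases hr with ⟨hrnone, he⟩ | ⟨f, rfl, hdecf⟩
    · subst hrnone
      obtain ⟨rfl, -⟩ := RPDAProof.scans_to_none hscans rfl
      exact he
    · rcases RPDAProof.scans_sound hscans ⟨[], rfl⟩ with ⟨⟨bs, heq⟩, hlsteps⟩
      have hβ : β = [] := by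
        cases bs with
        | nil =>
          simp only [RPDAProof.mach_bot, List.map_nil, List.nil_append,
            List.cons.injEq] at heq
          exact heq.2
        | cons b bs' =>
          exfalso
          simp only [RPDAProof.mach_bot, List.map_cons, List.cons_append,
            List.cons.injEq] at heq
          exact nomatch heq.1
      subst hβ
      have hlsteps' : RPDAProof.LSteps g [Sum.inl (RPDAProof.i0 g)] w [] := by
        simpa [RPDAProof.dq, hdecf] using hlsteps
      have hls := RPDAProof.parse_sound hlsteps'
      rcases hls.cons_inv with ⟨w₁, v, rfl, hw₁, hv⟩
      have hvnil := hv.nil_inv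
      subst hvnil
      rw [RPDAProof.lang_i0] at hw₁
      rw [← hg]
      have := (ContextFreeGrammar.mem_language_iff g w₁).mpr hw₁.2
      simpa using this
  · intro hw
    cases w with
    | nil =>
      exact ⟨none, Or.inl ⟨rfl, hw⟩, [], RestrictedPDA.Scans.refl _⟩
    | cons a w' =>
      have hmem : (a :: w') ∈ g.language := by rw [hg]; exact hw
      have hder := (ContextFreeGrammar.mem_language_iff g (a :: w')).mp hmem
      have hls : RPDAProof.LS g [Sum.inl (RPDAProof.i0 g)] (a :: w') := by
        refine RPDAProof.LS.single ?_
        rw [RPDAProof.lang_i0]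
        exact ⟨by simp, hder⟩
      have hsteps := RPDAProof.parse_complete hls
      obtain ⟨f, hdecf, hscans⟩ := RPDAProof.stage2 (e := ([] ∈ L)) hsteps rfl
        [Sum.inl (RPDAProof.i0 g)] [] none rfl rfl
        (by have := RPDAProof.bnd_ge_two (g := g); exact (show 1 ≤ 2 * RPDAProof.Bnd g by omega))
        (by intro b hb; cases hb)
        (by intro h; cases h)
      exact ⟨some f, Or.inr ⟨f, rfl, hdecf⟩, [], hscans⟩
end
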